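/- arXiv:2402.09630 — 11 statements merged into one kernel-verified Lean document; each statement's English description precedes it below -/
import Mathlib

section
/- Let f : ℝ → ℝ be continuously differentiable, let u_- > 0 and s ∈ ℝ. Suppose U : ℝ → ℝ is twice continuously differentiable with U(z) > 0 for all z, U satisfies the profile equation -s·U'(z) - (U'/U)'(z) + (f∘U)'(z) = 0 for all z ∈ ℝ, U(z) → 0 as z → +∞, U(z) → u_- as z → -∞, and U'(z)/U(z) → 0 as z → ±∞. Then s = (f(u_-) - f(0))/u_- (the Rankine–Hugoniot condition). -/
open Filter

/-- If a positive C² profile `U` satisfies the travelling-wave equation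
`-s U' - (U'/U)' + (f ∘ U)' = 0` with far-field limits `0` at `+∞` and `u₋` at `-∞`,
and `U'/U → 0` at `±∞`, then the Rankine–Hugoniot condition `s = (f(u₋) - f(0))/u₋` holds. -/
theorem stmt_0
    (f : ℝ → ℝ) (hf : ContDiff ℝ 1 f)
    (um : ℝ) (hum : 0 < um) (s : ℝ)
    (U : ℝ → ℝ) (hU : ContDiff ℝ 2 U)
    (hUpos : ∀ z, 0 < U z)
    (heq : ∀ z : ℝ,
      -s * deriv U z - deriv (fun y => deriv U y / U y) z
        + deriv (fun y => f (U y)) z = 0)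
    (hUtop : Tendsto U atTop (nhds 0))
    (hUbot : Tendsto U atBot (nhds um))
    (hratiotop : Tendsto (fun z => deriv U z / U z) atTop (nhds 0))
    (hratiobot : Tendsto (fun z => deriv U z / U z) atBot (nhds 0)) :
    s = (f um - f 0) / um := by
  have hUd : Differentiable ℝ U := hU.differentiable (by norm_num)
  have hU' : ContDiff ℝ 1 (deriv U) := by
    have hU2 : ContDiff ℝ ((1:ℕ∞)+1) U := by
      exact_mod_cast hU
    exact_mod_cast (contDiff_succ_iff_deriv.mp hU2).2.2
  have hratd : Differentiable ℝ (fun y => deriv U y / U y) :=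
    (hU'.differentiable (by norm_num)).div hUd (fun z => (hUpos z).ne')
  have hfUd : Differentiable ℝ (fun y => f (U y)) :=
    (hf.differentiable (by norm_num)).comp hUd
  set G : ℝ → ℝ := fun z => -s * U z - deriv U z / U z + f (U z) with hGdef
  have hGd : Differentiable ℝ G :=
    (((hUd.const_mul (-s)).sub hratd).add hfUd)
  have hG' : ∀ z, deriv G z = 0 := by
    intro z
    have h1 : HasDerivAt G (-s * deriv U z - deriv (fun y => deriv U y / U y) z
        + deriv (fun y => f (U y)) z) z := by
      have hu := (hUd z).hasDerivAt
      have hr := (hratd z).hasDerivAt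
      have hc := (hfUd z).hasDerivAt
      have := ((hu.const_mul (-s)).sub hr).add hc
      simpa [hGdef, neg_mul, Pi.add_def, Pi.sub_def] using this
    rw [h1.deriv]
    exact heq z
  have hconst : ∀ z, G z = G 0 := fun z =>
    is_const_of_deriv_eq_zero hGd hG' z 0
  have hGc : Tendsto G atTop (nhds (G 0)) := by
    have : G = fun _ => G 0 := funext hconst
    rw [this]; exact tendsto_const_nhds
  have hGc' : Tendsto G atBot (nhds (G 0)) := by
    have : G = fun _ => G 0 := funext hconst
    rw [this]; exact tendsto_const_nhds
  have hGtop : Tendsto G atTop (nhds (-s * 0 - 0 + f 0)) :=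
    ((hUtop.const_mul (-s)).sub hratiotop).add
      ((hf.continuous.tendsto 0).comp hUtop)
  have hGbot : Tendsto G atBot (nhds (-s * um - 0 + f um)) :=
    ((hUbot.const_mul (-s)).sub hratiobot).add
      ((hf.continuous.tendsto um).comp hUbot)
  have e1 : G 0 = -s * 0 - 0 + f 0 := tendsto_nhds_unique hGc hGtop
  have e2 : G 0 = -s * um - 0 + f um := tendsto_nhds_unique hGc' hGbot
  have : -s * um + f um = f 0 := by linarith [e1, e2]
  field_simp
  linarith
end

section
/- Let f : ℝ → ℝ be continuously differentiable, let u_- > 0 and s = (f(u_-) - f(0))/u_-, and set g(u) = f(u) - f(0) - s·u. Suppose U : ℝ → ℝ is continuously differentiable with 0 < U(z) < u_- for all z, U'(z) = U(z)·g(U(z)) for all z ∈ ℝ, U(z) → 0 as z → +∞ and U(z) → u_- as z → -∞. Then the generalized shock condition holds: g(u) < 0 for every u ∈ (0, u_-). -/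
open Filter

/-- If a C¹ shock profile `U` with values in `(0, u₋)` satisfies
`U' = U · g(U)` with limits `0` at `+∞` and `u₋` at `-∞`, where
`g(u) = f(u) - f(0) - s·u` and `s = (f(u₋) - f(0))/u₋`, then the generalized shock
condition holds: `g(u) < 0` for all `u ∈ (0, u₋)`. -/
theorem stmt_1
    (f : ℝ → ℝ) (hf : ContDiff ℝ 1 f)
    (um : ℝ) (hum : 0 < um)
    (s : ℝ) (hs : s = (f um - f 0) / um)
    (g : ℝ → ℝ) (hg : ∀ u, g u = f u - f 0 - s * u)
    (U : ℝ → ℝ) (hU : ContDiff ℝ 1 U)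
    (hUrange : ∀ z, U z ∈ Set.Ioo 0 um)
    (hUode : ∀ z, deriv U z = U z * g (U z))
    (hUtop : Tendsto U atTop (nhds 0))
    (hUbot : Tendsto U atBot (nhds um)) :
    ∀ u ∈ Set.Ioo 0 um, g u < 0 := by
  intro u₀ hu₀
  obtain ⟨hu₀pos, hu₀lt⟩ := hu₀
  by_contra hcon
  push_neg at hcon
  -- basic facts
  have hUcont : Continuous U := hU.continuous
  have hUdiff : ∀ z, HasDerivAt U (U z * g (U z)) z := by
    intro z
    have h := (hU.differentiable one_ne_zero z).hasDerivAt
    rwa [hUode z] at h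
  have hgc : ContDiff ℝ 1 g := by
    have : g = fun u => f u - f 0 - s * u := funext hg
    rw [this]
    exact (hf.sub contDiff_const).sub (contDiff_const.mul contDiff_id)
  have hw : ContDiff ℝ 1 (fun u : ℝ => u * g u) := contDiff_id.mul hgc
  -- eventual bounds
  obtain ⟨A, hA⟩ := eventually_atTop.1 (hUtop.eventually_lt_const hu₀pos)
  obtain ⟨B, hB⟩ := eventually_atBot.1 (hUbot.eventually_const_lt hu₀lt)
  -- the level set
  set S : Set ℝ := {z | U z = u₀} with hS
  have hSne : S.Nonempty := by
    have hpq : min A B - 1 ≤ max A B + 1 := by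
      have := min_le_max (a := A) (b := B); linarith
    have hIVT := intermediate_value_Icc' hpq hUcont.continuousOn
    have hmem : u₀ ∈ Set.Icc (U (max A B + 1)) (U (min A B - 1)) := by
      constructor
      · exact (hA _ (by have := le_max_left A B; linarith)).le
      · exact (hB _ (by have := min_le_right A B; linarith)).le
    obtain ⟨z₀, _, hz₀⟩ := hIVT hmem
    exact ⟨z₀, hz₀⟩
  have hSbdd : BddAbove S := by
    refine ⟨A, fun z hz => ?_⟩
    by_contra hzA
    push_neg at hzA
    exact absurd hz (ne_of_lt (hA z hzA.le))
  have hSclosed : IsClosed S := isClosed_eq hUcont continuous_const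
  set z₁ : ℝ := sSup S with hz₁
  have hz₁S : U z₁ = u₀ := hSclosed.csSup_mem hSne hSbdd
  -- to the right of z₁, U < u₀
  have hlt : ∀ z, z₁ < z → U z < u₀ := by
    intro z hz
    rcases lt_trichotomy (U z) u₀ with h | h | h
    · exact h
    · exact absurd (le_csSup hSbdd h) (not_le.2 hz)
    · exfalso
      have hzq : z ≤ max A z + 1 := by have := le_max_right A z; linarith
      have hUq : U (max A z + 1) < u₀ := hA _ (by have := le_max_left A z; linarith)
      obtain ⟨y, hy, hyu⟩ := intermediate_value_Icc' hzq hUcont.continuousOn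
        ⟨hUq.le, h.le⟩
      have : y ≤ z₁ := le_csSup hSbdd hyu
      linarith [hy.1]
  -- the derivative at z₁ is nonpositive
  have hd : HasDerivWithinAt U (U z₁ * g (U z₁)) (Set.Ioi z₁) z₁ :=
    (hUdiff z₁).hasDerivWithinAt
  rw [hasDerivWithinAt_iff_tendsto_slope] at hd
  have hset : Set.Ioi z₁ \ {z₁} = Set.Ioi z₁ :=
    Set.diff_singleton_eq_self (by simp)
  rw [hset] at hd
  have hle : U z₁ * g (U z₁) ≤ 0 := by
    refine le_of_tendsto hd (eventually_nhdsWithin_of_forall fun z hz => ?_)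
    rw [slope_def_field]
    have h1 : U z - U z₁ ≤ 0 := by
      rw [hz₁S]; linarith [hlt z hz]
    have h2 : 0 ≤ z - z₁ := by
      have : z₁ < z := hz; linarith
    rw [div_eq_mul_inv]  -- slope is (U z - U z₁)/(z - z₁)
    exact mul_nonpos_of_nonpos_of_nonneg h1 (inv_nonneg.2 h2)
  rw [hz₁S] at hle
  have hg0 : g u₀ = 0 := by nlinarith
  -- uniqueness of ODE solutions: U ≡ u₀ to the right of z₁
  obtain ⟨C, hC⟩ := (isCompact_Icc (a := (0:ℝ)) (b := um)).exists_bound_of_continuousOn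
    ((hw.continuous_deriv le_rfl).continuousOn)
  have hLip : LipschitzOnWith C.toNNReal (fun u : ℝ => u * g u) (Set.Icc 0 um) := by
    apply (convex_Icc (0:ℝ) um).lipschitzOnWith_of_nnnorm_deriv_le
      (fun x _ => (hw.differentiable one_ne_zero) x)
    intro x hx
    rw [← NNReal.coe_le_coe, coe_nnnorm, Real.coe_toNNReal']
    exact (hC x hx).trans (le_max_left _ _)
  have key : ∀ z, z₁ ≤ z → U z = u₀ := by
    intro z hzz
    have huniq := ODE_solution_unique_of_mem_Icc_right
      (v := fun _ u => u * g u) (s := fun _ => Set.Icc 0 um) (K := C.toNNReal)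
      (f := U) (g := fun _ => u₀) (a := z₁) (b := z)
      (fun _ _ => hLip)
      hUcont.continuousOn
      (fun t _ => (hUdiff t).hasDerivWithinAt)
      (fun t _ => ⟨(hUrange t).1.le, (hUrange t).2.le⟩)
      continuousOn_const
      (fun t _ => by
        have : (u₀ : ℝ) * g u₀ = 0 := by rw [hg0]; ring
        simpa [this] using (hasDerivWithinAt_const t (Set.Ici t) u₀))
      (fun t _ => ⟨hu₀pos.le, hu₀lt.le⟩)
      hz₁S
    exact huniq ⟨hzz, le_refl z⟩
  have heq : U =ᶠ[atTop] fun _ => u₀ := eventually_atTop.2 ⟨z₁, key⟩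
  have : (0 : ℝ) = u₀ := tendsto_nhds_unique (hUtop.congr' heq) tendsto_const_nhds
  linarith
end

section
/- Let f : ℝ → ℝ be continuously differentiable, let u_- > 0, set s = (f(u_-) - f(0))/u_- and g(u) = f(u) - f(0) - s·u, and assume g(u) < 0 for every u ∈ (0, u_-). Then there exists a continuously differentiable function U : ℝ → ℝ with 0 < U(z) < u_- for all z, satisfying U'(z) = U(z)·g(U(z)) for all z ∈ ℝ, U(z) → u_- as z → -∞, U(z) → 0 as z → +∞, and U'(z) < 0 for all z ∈ ℝ. -/
open Filter

open Set MeasureTheory intervalIntegral in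
/-- Auxiliary: the full construction. -/
theorem stmt_2_aux
    (um : ℝ) (hum : 0 < um)
    (g : ℝ → ℝ) (hg1 : ContDiff ℝ 1 g) (hgum : g um = 0)
    (hshock : ∀ u ∈ Set.Ioo 0 um, g u < 0) :
    ∃ U : ℝ → ℝ, ContDiff ℝ 1 U ∧
      (∀ z, U z ∈ Set.Ioo 0 um) ∧
      (∀ z, deriv U z = U z * g (U z)) ∧
      Tendsto U atBot (nhds um) ∧
      Tendsto U atTop (nhds 0) ∧
      (∀ z, deriv U z < 0) := by
  classical
  set T : Set ℝ := Set.Ioo 0 um with hT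
  set F : ℝ → ℝ := fun u => u * g u with hFdef
  have hF1 : ContDiff ℝ 1 F := contDiff_id.mul hg1
  have hFc : Continuous F := hF1.continuous
  have hFneg : ∀ u ∈ T, F u < 0 := fun u hu => mul_neg_of_pos_of_neg hu.1 (hshock u hu)
  set φ : ℝ → ℝ := fun v => (F v)⁻¹ with hφdef
  have hφneg : ∀ u ∈ T, φ u < 0 := fun u hu => inv_lt_zero.mpr (hFneg u hu)
  have hφca : ∀ u ∈ T, ContinuousAt φ u := fun u hu =>
    hFc.continuousAt.inv₀ (hFneg u hu).ne
  have hφco : ContinuousOn φ T := fun u hu => (hφca u hu).continuousWithinAt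
  have hTord : Set.OrdConnected T := Set.ordConnected_Ioo
  have hφint : ∀ a ∈ T, ∀ b ∈ T, IntervalIntegrable φ volume a b := fun a ha b hb =>
    (hφco.mono (hTord.uIcc_subset ha hb)).intervalIntegrable
  set u₀ : ℝ := um / 2 with hu₀def
  have hu₀ : u₀ ∈ T := ⟨by positivity, by simp only [hu₀def]; linarith⟩
  set h : ℝ → ℝ := fun u => ∫ v in u₀..u, φ v with hhdef
  have hhd : ∀ u ∈ T, HasDerivAt h (φ u) u := fun u hu =>
    integral_hasDerivAt_right (hφint u₀ hu₀ u hu)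
      ((hFc.measurable.inv.stronglyMeasurable).stronglyMeasurableAtFilter) (hφca u hu)
  have hhsub : ∀ a ∈ T, ∀ b ∈ T, h b - h a = ∫ v in a..b, φ v := fun a ha b hb =>
    integral_interval_sub_left (hφint u₀ hu₀ b hb) (hφint u₀ hu₀ a ha)
  have hanti : StrictAntiOn h T := by
    intro a ha b hb hab
    have hsub : Set.Ioo a b ⊆ T := fun x hx => ⟨lt_trans ha.1 hx.1, lt_trans hx.2 hb.2⟩
    have hpos : 0 < ∫ v in a..b, -φ v :=
      intervalIntegral_pos_of_pos_on ((hφint a ha b hb).neg)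
        (fun x hx => neg_pos.mpr (hφneg x (hsub hx))) hab
    rw [intervalIntegral.integral_neg] at hpos
    have := hhsub a ha b hb
    linarith
  -- bound near 0
  obtain ⟨M, hM⟩ := (isCompact_Icc (a := (0:ℝ)) (b := um)).exists_bound_of_continuousOn
    hg1.continuous.continuousOn
  have hMpos : 0 < M := by
    have h1 : ‖g u₀‖ ≤ M := hM u₀ ⟨hu₀.1.le, hu₀.2.le⟩
    have h2 : g u₀ < 0 := hshock u₀ hu₀
    have : 0 < ‖g u₀‖ := by rw [Real.norm_eq_abs]; exact abs_pos.mpr h2.ne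
    linarith
  have hlow : ∀ u ∈ Set.Ioo 0 u₀, M⁻¹ * (Real.log u₀ - Real.log u) ≤ h u := by
    intro u hu
    have huT : u ∈ T := ⟨hu.1, lt_trans hu.2 hu₀.2⟩
    have hIccT : Set.Icc u u₀ ⊆ T := fun x hx => ⟨lt_of_lt_of_le hu.1 hx.1, lt_of_le_of_lt hx.2 hu₀.2⟩
    have hptwise : ∀ x ∈ Set.Icc u u₀, M⁻¹ * x⁻¹ ≤ -φ x := by
      intro x hx
      have hxT := hIccT hx
      have hx0 : 0 < x := hxT.1
      have hFx : 0 < -F x := by linarith [hFneg x hxT]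
      have hb : -F x ≤ x * M := by
        have : -g x ≤ M := by
          have := hM x ⟨hx0.le, hxT.2.le⟩
          rw [Real.norm_eq_abs] at this
          cases abs_cases (g x) with
          | inl h => linarith [h.1]
          | inr h => linarith [h.1]
        have : x * (-g x) ≤ x * M := mul_le_mul_of_nonneg_left this hx0.le
        simpa [hFdef, mul_neg] using this
      have := inv_anti₀ hFx hb
      calc M⁻¹ * x⁻¹ = (x * M)⁻¹ := by rw [mul_inv]; ring
        _ ≤ (-F x)⁻¹ := this
        _ = -φ x := by rw [hφdef]; simp [inv_neg]
    have hint1 : IntervalIntegrable (fun x => M⁻¹ * x⁻¹) volume u u₀ := by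
      apply ContinuousOn.intervalIntegrable
      apply ContinuousOn.mul continuousOn_const
      apply ContinuousOn.inv₀ continuousOn_id
      intro x hx
      rw [Set.uIcc_of_le hu.2.le] at hx
      exact (hIccT hx).1.ne'
    have hint2 : IntervalIntegrable (fun x => -φ x) volume u u₀ := (hφint u huT u₀ hu₀).neg
    have hmono : (∫ x in u..u₀, M⁻¹ * x⁻¹) ≤ ∫ x in u..u₀, -φ x := by
      apply intervalIntegral.integral_mono_on hu.2.le hint1 hint2
      exact hptwise
    have hder : ∀ x ∈ Set.uIcc u u₀, HasDerivAt (fun v => M⁻¹ * Real.log v) (M⁻¹ * x⁻¹) x := by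
      intro x hx
      rw [Set.uIcc_of_le hu.2.le] at hx
      exact (Real.hasDerivAt_log (hIccT hx).1.ne').const_mul M⁻¹
    have hcomp : (∫ x in u..u₀, M⁻¹ * x⁻¹) = M⁻¹ * Real.log u₀ - M⁻¹ * Real.log u :=
      intervalIntegral.integral_eq_sub_of_hasDerivAt hder hint1
    have : h u = ∫ x in u..u₀, -φ x := by
      rw [hhdef]
      simp only [intervalIntegral.integral_neg]
      rw [← intervalIntegral.integral_symm]
    rw [this]
    calc M⁻¹ * (Real.log u₀ - Real.log u) = M⁻¹ * Real.log u₀ - M⁻¹ * Real.log u := by ring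
      _ = ∫ x in u..u₀, M⁻¹ * x⁻¹ := hcomp.symm
      _ ≤ _ := hmono
  have hTop : Tendsto h (nhdsWithin 0 (Set.Ioi 0)) atTop := by
    have hle : (fun u => M⁻¹ * (Real.log u₀ - Real.log u)) ≤ᶠ[nhdsWithin 0 (Set.Ioi 0)] h := by
      filter_upwards [Ioo_mem_nhdsGT_of_mem (Set.mem_Ico.mpr ⟨le_refl 0, hu₀.1⟩)] with u hu
      exact hlow u hu
    have hb : Tendsto (fun u => M⁻¹ * (Real.log u₀ - Real.log u))
        (nhdsWithin 0 (Set.Ioi 0)) atTop := by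
      apply Tendsto.const_mul_atTop (by positivity : (0:ℝ) < M⁻¹)
      have h1 : Tendsto (fun u : ℝ => -Real.log u) (nhdsWithin 0 (Set.Ioi 0)) atTop :=
        tendsto_neg_atBot_atTop.comp Real.tendsto_log_nhdsGT_zero
      have := tendsto_atTop_add_const_left _ (Real.log u₀) h1
      simpa [sub_eq_add_neg] using this
    exact tendsto_atTop_mono' _ hle hb
  -- bound near um
  obtain ⟨K₀, hK₀⟩ := (isCompact_Icc (a := (0:ℝ)) (b := um)).exists_bound_of_continuousOn
    (hg1.continuous_deriv le_rfl).continuousOn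
  set K : ℝ := max K₀ 1 with hKdef
  have hKpos : 0 < K := lt_of_lt_of_le one_pos (le_max_right _ _)
  have hgb : ∀ v ∈ Set.Icc (0:ℝ) um, -g v ≤ K * (um - v) := by
    intro v hv
    have hdiffe : ∀ x ∈ Set.Icc (0:ℝ) um, DifferentiableAt ℝ g x := fun x _ =>
      hg1.differentiable one_ne_zero x
    have hbd : ∀ x ∈ Set.Icc (0:ℝ) um, ‖deriv g x‖ ≤ K := fun x hx =>
      le_trans (hK₀ x hx) (le_max_left _ _)
    have := (convex_Icc (0:ℝ) um).norm_image_sub_le_of_norm_deriv_le hdiffe hbd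
      (Set.mem_Icc.mpr ⟨hum.le, le_refl um⟩) hv
    rw [hgum, sub_zero, Real.norm_eq_abs, Real.norm_eq_abs,
      abs_of_nonpos (by linarith [hv.2] : v - um ≤ 0)] at this
    calc -g v ≤ |g v| := neg_le_abs _
      _ ≤ K * -(v - um) := this
      _ = K * (um - v) := by ring
  set C : ℝ := um * K with hCdef
  have hCpos : 0 < C := mul_pos hum hKpos
  have hhigh : ∀ u ∈ Set.Ioo u₀ um,
      h u ≤ C⁻¹ * Real.log (um - u) - C⁻¹ * Real.log (um - u₀) := by
    intro u hu
    have huT : u ∈ T := ⟨lt_trans hu₀.1 hu.1, hu.2⟩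
    have hIccT : Set.Icc u₀ u ⊆ T := fun x hx =>
      ⟨lt_of_lt_of_le hu₀.1 hx.1, lt_of_le_of_lt hx.2 hu.2⟩
    set ψ : ℝ → ℝ := fun v => -(C⁻¹ * (um - v)⁻¹) with hψdef
    have hptwise : ∀ x ∈ Set.Icc u₀ u, φ x ≤ ψ x := by
      intro x hx
      have hxT := hIccT hx
      have hx0 : 0 < x := hxT.1
      have hxum : x < um := hxT.2
      have hFx : 0 < -F x := by linarith [hFneg x hxT]
      have hb : -F x ≤ C * (um - x) := by
        have h1 : -g x ≤ K * (um - x) := hgb x ⟨hx0.le, hxum.le⟩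
        have h2 : x * (-g x) ≤ um * (K * (um - x)) := by
          apply mul_le_mul hxT.2.le h1 (by linarith [hshock x hxT] : 0 ≤ -g x) hum.le
        calc -F x = x * (-g x) := by rw [hFdef]; ring
          _ ≤ um * (K * (um - x)) := h2
          _ = C * (um - x) := by rw [hCdef]; ring
      have hCx : 0 < C * (um - x) := mul_pos hCpos (by linarith)
      have := inv_anti₀ hFx hb
      have h3 : (C * (um - x))⁻¹ ≤ (-F x)⁻¹ := this
      have h4 : -(-F x)⁻¹ ≤ -(C * (um - x))⁻¹ := by linarith
      calc φ x = -(-F x)⁻¹ := by rw [hφdef]; simp [inv_neg]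
        _ ≤ -(C * (um - x))⁻¹ := h4
        _ = ψ x := by rw [hψdef, mul_inv]
    have hint2 : IntervalIntegrable ψ volume u₀ u := by
      apply ContinuousOn.intervalIntegrable
      apply ContinuousOn.neg
      apply ContinuousOn.mul continuousOn_const
      apply ContinuousOn.inv₀ (by fun_prop)
      intro x hx
      rw [Set.uIcc_of_le hu.1.le] at hx
      have := (hIccT hx).2
      intro hc
      rw [sub_eq_zero] at hc
      exact absurd hc.symm this.ne
    have hint1 : IntervalIntegrable φ volume u₀ u := hφint u₀ hu₀ u huT
    have hmono : (∫ x in u₀..u, φ x) ≤ ∫ x in u₀..u, ψ x := by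
      apply intervalIntegral.integral_mono_on hu.1.le hint1 hint2 hptwise
    have hder : ∀ x ∈ Set.uIcc u₀ u,
        HasDerivAt (fun v => C⁻¹ * Real.log (um - v)) (ψ x) x := by
      intro x hx
      rw [Set.uIcc_of_le hu.1.le] at hx
      have hxum : um - x ≠ 0 := by
        have := (hIccT hx).2
        intro hc; rw [sub_eq_zero] at hc; exact absurd hc.symm this.ne
      have hinner : HasDerivAt (fun v : ℝ => um - v) (-1) x := by
        simpa using (hasDerivAt_id x).const_sub um
      have h5 := ((Real.hasDerivAt_log hxum).comp x hinner).const_mul C⁻¹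
      have h6 : C⁻¹ * ((um - x)⁻¹ * -1) = ψ x := by rw [hψdef]; ring
      rw [h6] at h5
      simpa [Function.comp] using h5
    have hcomp : (∫ x in u₀..u, ψ x)
        = C⁻¹ * Real.log (um - u) - C⁻¹ * Real.log (um - u₀) :=
      intervalIntegral.integral_eq_sub_of_hasDerivAt hder hint2
    calc h u = ∫ x in u₀..u, φ x := rfl
      _ ≤ ∫ x in u₀..u, ψ x := hmono
      _ = _ := hcomp
  have hBot : Tendsto h (nhdsWithin um (Set.Iio um)) atBot := by
    have hle : h ≤ᶠ[nhdsWithin um (Set.Iio um)]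
        (fun u => C⁻¹ * Real.log (um - u) - C⁻¹ * Real.log (um - u₀)) := by
      filter_upwards [Ioo_mem_nhdsLT_of_mem (Set.mem_Ioc.mpr ⟨hu₀.2, le_refl um⟩)] with u hu
      exact hhigh u hu
    refine tendsto_atBot_mono' _ hle ?_
    have h0 : Tendsto (fun u : ℝ => um - u) (nhdsWithin um (Set.Iio um))
          (nhdsWithin 0 (Set.Ioi 0)) := by
        apply tendsto_nhdsWithin_of_tendsto_nhds_of_eventually_within
        · have : Tendsto (fun u : ℝ => um - u) (nhds um) (nhds (um - um)) :=
            (tendsto_const_nhds.sub tendsto_id)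
          simpa using this.mono_left nhdsWithin_le_nhds
        · filter_upwards [self_mem_nhdsWithin] with u hu
          exact Set.mem_Ioi.mpr (by linarith [Set.mem_Iio.mp hu])
    have h1 : Tendsto (fun u : ℝ => Real.log (um - u)) (nhdsWithin um (Set.Iio um)) atBot :=
      Real.tendsto_log_nhdsGT_zero.comp h0
    have h2 : Tendsto (fun u : ℝ => C⁻¹ * Real.log (um - u)) (nhdsWithin um (Set.Iio um))
        atBot := Tendsto.const_mul_atBot (by positivity : (0:ℝ) < C⁻¹) h1
    simpa [sub_eq_add_neg] using tendsto_atBot_add_const_right _ (-(C⁻¹ * Real.log (um - u₀))) h2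
  -- surjectivity of h onto ℝ
  have hsurj : ∀ z : ℝ, ∃ u ∈ T, h u = z := by
    intro z
    obtain ⟨a, haz, haI⟩ :=
      ((hTop.eventually (eventually_gt_atTop z)).and
        (Ioo_mem_nhdsGT_of_mem (Set.mem_Ico.mpr ⟨le_refl 0, hu₀.1⟩))).exists
    obtain ⟨b, hbz, hbI⟩ :=
      ((hBot.eventually (eventually_lt_atBot z)).and
        (Ioo_mem_nhdsLT_of_mem (Set.mem_Ioc.mpr ⟨hu₀.2, le_refl um⟩))).exists
    have haT : a ∈ T := ⟨haI.1, lt_trans haI.2 hu₀.2⟩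
    have hbT : b ∈ T := ⟨lt_trans hu₀.1 hbI.1, hbI.2⟩
    have hab : a < b := by
      by_contra hc
      push_neg at hc
      rcases eq_or_lt_of_le hc with heq | hlt
      · rw [heq] at hbz; linarith
      · have := hanti hbT haT hlt; linarith
    have hsubT : Set.Icc a b ⊆ T := fun x hx =>
      ⟨lt_of_lt_of_le haT.1 hx.1, lt_of_le_of_lt hx.2 hbT.2⟩
    have hconth : ContinuousOn h (Set.Icc a b) := fun x hx =>
      ((hhd x (hsubT hx)).continuousAt).continuousWithinAt
    have : z ∈ Set.Icc (h b) (h a) := ⟨hbz.le, haz.le⟩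
    obtain ⟨u, huab, huz⟩ := intermediate_value_Icc' hab.le hconth this
    exact ⟨u, hsubT huab, huz⟩
  -- the order isomorphism and its inverse
  set e : T → ℝ := fun u => -h u with hedef
  have he : StrictMono e := fun u v huv => neg_lt_neg (hanti u.2 v.2 huv)
  have hesurj : Function.Surjective e := by
    intro z
    obtain ⟨u, huT, hu⟩ := hsurj (-z)
    exact ⟨⟨u, huT⟩, by simp [hedef, hu]⟩
  set iso := StrictMono.orderIsoOfSurjective e he hesurj with hisodef
  set U : ℝ → ℝ := fun z => (iso.symm (-z) : ℝ) with hUdef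
  have hUmem : ∀ z, U z ∈ T := fun z => (iso.symm (-z)).2
  have hhU : ∀ z, h (U z) = z := by
    intro z
    have := iso.apply_symm_apply (-z)
    have h2 : e (iso.symm (-z)) = -z := this
    simp only [hedef] at h2
    have : -h (U z) = -z := h2
    linarith
  have hUcont : Continuous U :=
    continuous_subtype_val.comp (iso.symm.continuous.comp continuous_neg)
  have hUd : ∀ z, HasDerivAt U (F (U z)) z := by
    intro z
    have h1 : HasDerivAt h (φ (U z)) (U z) := hhd _ (hUmem z)
    have hne : φ (U z) ≠ 0 := inv_ne_zero (hFneg _ (hUmem z)).ne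
    have := HasDerivAt.of_local_left_inverse (hUcont.continuousAt) h1 hne
      (Filter.Eventually.of_forall hhU)
    simpa [hφdef, inv_inv] using this
  have hderivU : ∀ z, deriv U z = U z * g (U z) := fun z => by
    rw [(hUd z).deriv]
  have hUanti : Antitone U := by
    intro z w hzw
    exact iso.symm.monotone (neg_le_neg hzw)
  have hrange : Set.range U = T := by
    ext u
    constructor
    · rintro ⟨z, rfl⟩; exact hUmem z
    · intro hu
      refine ⟨-e ⟨u, hu⟩, ?_⟩
      simp only [hUdef, neg_neg, hisodef]
      rw [StrictMono.orderIsoOfSurjective_symm_apply_self]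
  refine ⟨U, ?_, hUmem, hderivU, ?_, ?_, ?_⟩
  · rw [contDiff_one_iff_deriv]
    refine ⟨fun z => (hUd z).differentiableAt, ?_⟩
    have : deriv U = fun z => F (U z) := funext fun z => (hUd z).deriv
    rw [this]
    exact hFc.comp hUcont
  · have hbdd : BddAbove (Set.range U) := by rw [hrange]; exact bddAbove_Ioo
    have := tendsto_atBot_ciSup hUanti hbdd
    have hsup : ⨆ z, U z = um := by
      rw [iSup, hrange, hT, csSup_Ioo hum]
    rwa [hsup] at this
  · have hbdd : BddBelow (Set.range U) := by rw [hrange]; exact bddBelow_Ioo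
    have := tendsto_atTop_ciInf hUanti hbdd
    have hinf : ⨅ z, U z = 0 := by
      rw [iInf, hrange, hT, csInf_Ioo hum]
    rwa [hinf] at this
  · intro z
    rw [hderivU z]
    exact mul_neg_of_pos_of_neg (hUmem z).1 (hshock _ (hUmem z))

/-- Under the generalized shock condition `g < 0` on `(0, u₋)`, there exists a
C¹ shock profile `U` with values in `(0, u₋)` satisfying `U' = U · g(U)`, the far-field
limits `u₋` at `-∞` and `0` at `+∞`, and `U' < 0` everywhere. -/
theorem stmt_2
    (f : ℝ → ℝ) (hf : ContDiff ℝ 1 f)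
    (um : ℝ) (hum : 0 < um)
    (s : ℝ) (hs : s = (f um - f 0) / um)
    (g : ℝ → ℝ) (hg : ∀ u, g u = f u - f 0 - s * u)
    (hshock : ∀ u ∈ Set.Ioo 0 um, g u < 0) :
    ∃ U : ℝ → ℝ, ContDiff ℝ 1 U ∧
      (∀ z, U z ∈ Set.Ioo 0 um) ∧
      (∀ z, deriv U z = U z * g (U z)) ∧
      Tendsto U atBot (nhds um) ∧
      Tendsto U atTop (nhds 0) ∧
      (∀ z, deriv U z < 0) := by
  have hg1 : ContDiff ℝ 1 g := by
    have : g = fun u => f u - f 0 - s * u := funext hg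
    rw [this]
    exact (hf.sub contDiff_const).sub (contDiff_const.mul contDiff_id)
  have hgum : g um = 0 := by
    rw [hg, hs]
    field_simp
    ring
  exact stmt_2_aux um hum g hg1 hgum hshock
end

section
/- Let f : ℝ → ℝ be continuously differentiable, let u_- > 0, set s = (f(u_-) - f(0))/u_- and g(u) = f(u) - f(0) - s·u, and assume g(u) < 0 for every u ∈ (0, u_-). If U₁ and U₂ are two continuously differentiable functions ℝ → ℝ, each taking values in (0, u_-), each satisfying U'(z) = U(z)·g(U(z)) for all z ∈ ℝ with limits u_- at -∞ and 0 at +∞, then there exists z₀ ∈ ℝ such that U₂(z) = U₁(z + z₀) for all z ∈ ℝ; i.e., the shock profile is unique up to a shift. -/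
open Filter

/-- Under the generalized shock condition, any two shock profiles
(C¹ solutions of `U' = U·g(U)` valued in `(0, u₋)` with limits `u₋` at `-∞` and
`0` at `+∞`) coincide up to a translation. -/
theorem stmt_3
    (f : ℝ → ℝ) (hf : ContDiff ℝ 1 f)
    (um : ℝ) (hum : 0 < um)
    (s : ℝ) (hs : s = (f um - f 0) / um)
    (g : ℝ → ℝ) (hg : ∀ u, g u = f u - f 0 - s * u)
    (hshock : ∀ u ∈ Set.Ioo 0 um, g u < 0)
    (U₁ U₂ : ℝ → ℝ)
    (hU₁ : ContDiff ℝ 1 U₁) (hU₂ : ContDiff ℝ 1 U₂)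
    (hU₁range : ∀ z, U₁ z ∈ Set.Ioo 0 um)
    (hU₂range : ∀ z, U₂ z ∈ Set.Ioo 0 um)
    (hU₁ode : ∀ z, deriv U₁ z = U₁ z * g (U₁ z))
    (hU₂ode : ∀ z, deriv U₂ z = U₂ z * g (U₂ z))
    (hU₁bot : Tendsto U₁ atBot (nhds um)) (hU₁top : Tendsto U₁ atTop (nhds 0))
    (hU₂bot : Tendsto U₂ atBot (nhds um)) (hU₂top : Tendsto U₂ atTop (nhds 0)) :
    ∃ z₀ : ℝ, ∀ z, U₂ z = U₁ (z + z₀) := by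
  -- The vector field
  set F : ℝ → ℝ := fun u => u * g u with hF
  have hgC : ContDiff ℝ 1 g := by
    have : g = fun u => f u - f 0 - s * u := funext hg
    rw [this]
    exact (hf.sub contDiff_const).sub (contDiff_const.mul contDiff_id)
  have hFC : ContDiff ℝ 1 F := contDiff_id.mul hgC
  -- F is Lipschitz on Icc 0 um
  obtain ⟨C, hC⟩ : ∃ C, ∀ x ∈ Set.Icc (0:ℝ) um, ‖deriv F x‖ ≤ C := by
    obtain ⟨C, hC⟩ := (isCompact_Icc (a := (0:ℝ)) (b := um)).exists_bound_of_continuousOn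
      ((hFC.continuous_deriv le_rfl).continuousOn)
    exact ⟨C, hC⟩
  have hLip : LipschitzOnWith C.toNNReal F (Set.Icc 0 um) := by
    apply (convex_Icc (0:ℝ) um).lipschitzOnWith_of_nnnorm_deriv_le
      (fun x _ => (hFC.differentiable one_ne_zero).differentiableAt)
    intro x hx
    have := hC x hx
    rw [← NNReal.coe_le_coe]
    simp only [coe_nnnorm, Real.coe_toNNReal']
    exact le_max_of_le_left this
  -- find z₀ with U₁ z₀ = U₂ 0
  obtain ⟨hc1, hc2⟩ := hU₂range 0
  obtain ⟨w, hw⟩ : ∃ w, U₁ w = U₂ 0 := by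
    -- eventually U₁ > U₂ 0 at -∞, < at +∞
    have h1 : ∀ᶠ z in atBot, U₂ 0 < U₁ z :=
      hU₁bot.eventually (eventually_gt_nhds hc2)
    have h2 : ∀ᶠ z in atTop, U₁ z < U₂ 0 :=
      hU₁top.eventually (eventually_lt_nhds hc1)
    obtain ⟨a, ha⟩ := h1.exists
    obtain ⟨b, hb⟩ := h2.exists
    have : U₂ 0 ∈ Set.Icc (U₁ b) (U₁ a) := ⟨hb.le, ha.le⟩
    obtain ⟨w, hw⟩ := intermediate_value_univ b a (hU₁.continuous) this
    exact ⟨w, hw⟩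
  refine ⟨w, fun z => ?_⟩
  -- Both U₂ and z ↦ U₁ (z + w) solve the ODE
  set V : ℝ → ℝ := fun z => U₁ (z + w) with hV
  have hVd : ∀ t : ℝ, HasDerivAt V (F (V t)) t := by
    intro t
    have h1 : HasDerivAt U₁ (deriv U₁ (t + w)) (t + w) :=
      ((hU₁.differentiable one_ne_zero) (t + w)).hasDerivAt
    have h2 : HasDerivAt (fun z : ℝ => z + w) 1 t := (hasDerivAt_id t).add_const w
    have := h1.comp t h2
    simpa [hU₁ode (t + w), hF, hV, Function.comp_def] using this
  have hU₂d : ∀ t : ℝ, HasDerivAt U₂ (F (U₂ t)) t := by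
    intro t
    have := ((hU₂.differentiable one_ne_zero) t).hasDerivAt
    rw [hU₂ode t] at this
    exact this
  have heq0 : U₂ 0 = V 0 := by simp [hV, hw]
  -- uniqueness on Ioo (-(|z|+1)) (|z|+1)
  have hz : z ∈ Set.Ioo (-(|z|+1)) (|z|+1) := by
    constructor
    · nlinarith [abs_nonneg z, neg_abs_le z]
    · nlinarith [le_abs_self z]
  have h0 : (0:ℝ) ∈ Set.Ioo (-(|z|+1)) (|z|+1) := by
    constructor <;> nlinarith [abs_nonneg z]
  have := ODE_solution_unique_of_mem_Ioo (v := fun _ u => F u)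
    (s := fun _ => Set.Icc (0:ℝ) um) (fun _ _ => hLip) h0
    (f := U₂) (g := V)
    (fun t _ => ⟨hU₂d t, Set.mem_Icc_of_Ioo (hU₂range t)⟩)
    (fun t _ => ⟨hVd t, Set.mem_Icc_of_Ioo (hU₁range (t + w))⟩)
    heq0
  exact this hz
end

section
/- Let U be a shock profile and assume the nondegenerate condition f'(0) < s at the right state, i.e., g'(0) = f'(0) - s < 0. Then z·U(z) → 1/(s - f'(0)) as z → +∞; in particular U(z) decays to 0 at the algebraic rate |z|^{-1} as z → +∞. -/
open Filter

lemma aux_div_tendsto (V V' : ℝ → ℝ) (hV : ∀ x, HasDerivAt V (V' x) x) (L : ℝ)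
    (h : Tendsto V' atTop (nhds L)) :
    Tendsto (fun x => V x / x) atTop (nhds L) := by
  rw [Metric.tendsto_atTop]
  intro ε hε
  rw [Metric.tendsto_atTop] at h
  obtain ⟨a, ha⟩ := h (ε / 4) (by positivity)
  set W : ℝ → ℝ := fun x => V x - L * x with hW
  have hWd : ∀ x, HasDerivAt W (V' x - L) x := fun x =>
    (hV x).sub (by simpa using (hasDerivAt_id x).const_mul L)
  have key : ∀ x ≥ a, |W x - W a| ≤ ε / 4 * (x - a) := by
    intro x hx
    have h1 := Convex.norm_image_sub_le_of_norm_hasDerivWithin_le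
      (f := W) (f' := fun x => V' x - L) (s := Set.Ici a) (C := ε / 4)
      (fun y _ => (hWd y).hasDerivWithinAt)
      (fun y hy => by
        have h2 := ha y hy
        rw [Real.dist_eq] at h2
        simpa [Real.norm_eq_abs] using h2.le)
      (convex_Ici a) Set.self_mem_Ici hx
    rw [Real.norm_eq_abs, Real.norm_eq_abs,
      abs_of_nonneg (show (0:ℝ) ≤ x - a by linarith)] at h1
    exact h1
  set C : ℝ := |W a| + ε / 4 * |a| with hC
  have hC0 : 0 ≤ C := by positivity
  refine ⟨max a (4 * C / ε + 1), fun x hx => ?_⟩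
  have hxa : a ≤ x := le_trans (le_max_left _ _) hx
  have hxC : 4 * C / ε + 1 ≤ x := le_trans (le_max_right _ _) hx
  have hx0 : 0 < x := by nlinarith [div_nonneg (by linarith : (0:ℝ) ≤ 4 * C) hε.le]
  have hWx : |W x| ≤ C + ε / 4 * x := by
    have h1 := key x hxa
    have h2 : |W x| ≤ |W a| + |W x - W a| := by
      have := abs_add_le (W a) (W x - W a); simpa using this
    have h3 : ε / 4 * (x - a) ≤ ε / 4 * x + ε / 4 * |a| := by
      have := neg_abs_le a
      nlinarith
    rw [hC]; linarith
  have hdist : dist (V x / x) L = |W x| / x := by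
    rw [Real.dist_eq, hW]
    have he : V x / x - L = (V x - L * x) / x := by field_simp
    rw [he, abs_div, abs_of_pos hx0]
  rw [hdist, div_lt_iff₀ hx0]
  have hCx : 4 * C + ε ≤ ε * x := by
    rw [div_add' _ _ _ hε.ne', div_le_iff₀ hε] at hxC
    linarith
  simp only [hW, hC] at hWx hCx ⊢
  linarith [mul_pos hε hx0]

/-- For a shock profile `U` with the nondegenerate condition `f'(0) < s`
at the right state (i.e. `g'(0) = f'(0) - s < 0`), one has
`z · U(z) → 1/(s - f'(0))` as `z → +∞`, so `U` decays like `|z|⁻¹`. -/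
theorem stmt_4
    (f : ℝ → ℝ) (hf : ContDiff ℝ 1 f)
    (um : ℝ) (hum : 0 < um)
    (s : ℝ) (hs : s = (f um - f 0) / um)
    (g : ℝ → ℝ) (hg : ∀ u, g u = f u - f 0 - s * u)
    (U : ℝ → ℝ) (hU : ContDiff ℝ 1 U)
    (hUrange : ∀ z, U z ∈ Set.Ioo 0 um)
    (hUode : ∀ z, deriv U z = U z * g (U z))
    (hUbot : Tendsto U atBot (nhds um))
    (hUtop : Tendsto U atTop (nhds 0))
    (hnd : deriv f 0 < s) :
    Tendsto (fun z => z * U z) atTop (nhds (1 / (s - deriv f 0))) := by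
  have hg0 : g 0 = 0 := by rw [hg]; ring
  -- g has derivative deriv f 0 - s at 0
  have hgd : HasDerivAt g (deriv f 0 - s) 0 := by
    have hf' : HasDerivAt f (deriv f 0) 0 :=
      ((hf.differentiable one_ne_zero) 0).hasDerivAt
    have h1 : HasDerivAt (fun u => f u - f 0 - s * u) (deriv f 0 - s) 0 := by
      exact ((hf'.sub_const (f 0)).sub ((hasDerivAt_id 0).const_mul s)).congr_deriv (by simp)
    have : g = fun u => f u - f 0 - s * u := funext hg
    rw [this]; exact h1
  -- slope limit: g u / u → deriv f 0 - s as u → 0 (punctured)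
  have hslope : Tendsto (fun u => g u / u) (nhdsWithin 0 {(0:ℝ)}ᶜ)
      (nhds (deriv f 0 - s)) := by
    have h1 := hasDerivAt_iff_tendsto_slope.1 hgd
    refine h1.congr fun u => ?_
    rw [slope_def_field, hg0]
    simp
  have hUne : ∀ z, U z ≠ 0 := fun z => (hUrange z).1.ne'
  have hU0 : Tendsto U atTop (nhdsWithin 0 {(0:ℝ)}ᶜ) :=
    tendsto_nhdsWithin_of_tendsto_nhds_of_eventually_within _ hUtop
      (Eventually.of_forall fun z => hUne z)
  have hφ : Tendsto (fun z => g (U z) / U z) atTop (nhds (deriv f 0 - s)) :=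
    hslope.comp hU0
  -- V = 1/U has derivative -(g(U)/U)
  have hVd : ∀ z, HasDerivAt (fun z => (U z)⁻¹) (-(g (U z) / U z)) z := by
    intro z
    have hU' : HasDerivAt U (U z * g (U z)) z := by
      have := ((hU.differentiable one_ne_zero) z).hasDerivAt
      rwa [hUode z] at this
    have h1 := hU'.inv (hUne z)
    have hne := hUne z
    have e : -(g (U z) / U z) = -(U z * g (U z)) / U z ^ 2 := by
      rw [neg_div, pow_two, mul_div_mul_left _ _ hne]
    rw [e]; exact h1
  have hV' : Tendsto (fun z => -(g (U z) / U z)) atTop (nhds (s - deriv f 0)) := by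
    have := hφ.neg
    rwa [neg_sub] at this
  have hmain : Tendsto (fun z => (U z)⁻¹ / z) atTop (nhds (s - deriv f 0)) :=
    aux_div_tendsto _ _ hVd _ hV'
  have hL : (0:ℝ) < s - deriv f 0 := by linarith
  have hinv := hmain.inv₀ hL.ne'
  rw [one_div]
  refine hinv.congr fun z => ?_
  rw [inv_div, div_inv_eq_mul]
end

section
/- Let f be twice continuously differentiable, let U be a shock profile, and assume the nondegenerate condition s < f'(u_-) at the left state, i.e., g'(u_-) = f'(u_-) - s > 0. Set λ = u_-·(f'(u_-) - s). Then the limit L = lim_{z → -∞} e^{-λ z}·(u_- - U(z)) exists and is a positive real number; in particular there are constants 0 < C₁ ≤ C₂ with C₁·e^{λ z} ≤ u_- - U(z) ≤ C₂·e^{λ z} for all z ≤ 0. -/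
open Filter Set

lemma aux_mono_limit {ψ : ℝ → ℝ} {z₀ c : ℝ} (hmono : MonotoneOn ψ (Set.Iic z₀))
    (hbd : ∀ z ≤ z₀, c ≤ ψ z) : ∃ l : ℝ, Tendsto ψ atBot (nhds l) := by
  set Ψ : ℝ → ℝ := fun z => ψ (min z z₀) with hΨ
  have hm : Monotone Ψ := fun x y hxy =>
    hmono (min_le_right x z₀) (min_le_right y z₀) (min_le_min hxy le_rfl)
  have hb : BddBelow (Set.range Ψ) := ⟨c, by rintro _ ⟨z, rfl⟩; exact hbd _ (min_le_right z z₀)⟩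
  refine ⟨⨅ z, Ψ z, (tendsto_atBot_ciInf hm hb).congr' ?_⟩
  filter_upwards [eventually_le_atBot z₀] with z hz
  simp [hΨ, min_eq_left hz]

/-- For a shock profile `U` with the nondegenerate condition `s < f'(u₋)`
at the left state, setting `λ = u₋·(f'(u₋) - s)`, the limit
`L = lim_{z → -∞} e^{-λz}·(u₋ - U(z))` exists, is positive, and consequently
`C₁·e^{λz} ≤ u₋ - U(z) ≤ C₂·e^{λz}` for all `z ≤ 0` with some `0 < C₁ ≤ C₂`. -/
theorem stmt_5
    (f : ℝ → ℝ) (hf : ContDiff ℝ 2 f)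
    (um : ℝ) (hum : 0 < um)
    (s : ℝ) (hs : s = (f um - f 0) / um)
    (g : ℝ → ℝ) (hg : ∀ u, g u = f u - f 0 - s * u)
    (U : ℝ → ℝ) (hU : ContDiff ℝ 1 U)
    (hUrange : ∀ z, U z ∈ Set.Ioo 0 um)
    (hUode : ∀ z, deriv U z = U z * g (U z))
    (hUbot : Tendsto U atBot (nhds um))
    (hUtop : Tendsto U atTop (nhds 0))
    (hnd : 0 < deriv f um - s)
    (lam : ℝ) (hlam : lam = um * (deriv f um - s)) :
    ∃ L : ℝ, 0 < L ∧
      Tendsto (fun z => Real.exp (-(lam * z)) * (um - U z)) atBot (nhds L) ∧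
      ∃ C₁ C₂ : ℝ, 0 < C₁ ∧ C₁ ≤ C₂ ∧
        ∀ z ≤ (0 : ℝ), C₁ * Real.exp (lam * z) ≤ um - U z ∧
          um - U z ≤ C₂ * Real.exp (lam * z) := by
  have hfd : Differentiable ℝ f := hf.differentiable (by norm_num)
  set a : ℝ := deriv f um - s with ha
  have hgfun : g = fun u => f u - f 0 - s * u := funext hg
  have hgd : Differentiable ℝ g := by
    rw [hgfun]; exact (hfd.sub_const _).sub ((differentiable_id.const_mul s))
  have hgder : ∀ u, HasDerivAt g (deriv f u - s) u := by
    intro u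
    rw [hgfun]
    have h1 : HasDerivAt (fun u : ℝ => s * u) s u := by
      simpa using (hasDerivAt_id u).const_mul s
    exact ((hfd u).hasDerivAt.sub_const _).sub h1
  have hderivg : ∀ u, deriv g u = deriv f u - s := fun u => (hgder u).deriv
  have hgum : g um = 0 := by
    rw [hg, hs]; field_simp; ring
  -- second derivative bound
  have hf1 : ContDiff ℝ 1 (deriv f) := by
    have : (2 : WithTop ℕ∞) = 1 + 1 := by norm_num
    rw [this, contDiff_succ_iff_deriv] at hf
    exact hf.2.2
  have hf1d : Differentiable ℝ (deriv f) := hf1.differentiable (by norm_num)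
  have hf2c : Continuous (deriv (deriv f)) := (contDiff_one_iff_deriv.mp hf1).2
  obtain ⟨K0, hK0⟩ : ∃ K0, ∀ t ∈ Icc (0:ℝ) um, ‖deriv (deriv f) t‖ ≤ K0 :=
    isCompact_Icc.exists_bound_of_continuousOn hf2c.continuousOn
  set K : ℝ := max K0 0 with hKdef
  have hKnn : 0 ≤ K := le_max_right _ _
  have hK : ∀ t ∈ Icc (0:ℝ) um, ‖deriv (deriv f) t‖ ≤ K :=
    fun t ht => (hK0 t ht).trans (le_max_left _ _)
  -- Lipschitz bound on deriv f
  have hLip : ∀ t ∈ Icc (0:ℝ) um, ‖deriv f t - deriv f um‖ ≤ K * ‖t - um‖ := by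
    intro t ht
    exact Convex.norm_image_sub_le_of_norm_deriv_le (fun x _ => hf1d x) hK
      (convex_Icc _ _) (right_mem_Icc.mpr hum.le) ht
  -- Taylor estimate
  have hTaylor : ∀ u ∈ Icc (0:ℝ) um, |g u - a * (u - um)| ≤ K * (um - u) ^ 2 := by
    intro u hu
    set φ : ℝ → ℝ := fun t => g t - a * t with hφ
    have hφd : Differentiable ℝ φ := hgd.sub (differentiable_id.const_mul a)
    have hφderiv : ∀ t, deriv φ t = deriv f t - deriv f um := by
      intro t
      have h1 : HasDerivAt (fun t : ℝ => a * t) a t := by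
        simpa using (hasDerivAt_id t).const_mul a
      have h2 : HasDerivAt φ (deriv f t - s - a) t := (hgder t).sub h1
      rw [h2.deriv, ha]; ring
    have hbound : ∀ t ∈ Icc u um, ‖deriv φ t‖ ≤ K * (um - u) := by
      intro t ht
      rw [hφderiv]
      have ht' : t ∈ Icc (0:ℝ) um := ⟨hu.1.trans ht.1, ht.2⟩
      refine (hLip t ht').trans ?_
      have : ‖t - um‖ ≤ um - u := by
        rw [Real.norm_eq_abs, abs_sub_comm, abs_of_nonneg (by linarith [ht.2])]
        linarith [ht.1]
      nlinarith [this, hKnn, norm_nonneg (t - um)]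
    have := Convex.norm_image_sub_le_of_norm_deriv_le (fun x _ => hφd x) hbound
      (convex_Icc _ _) (right_mem_Icc.mpr hu.2) (left_mem_Icc.mpr hu.2)
    have heq : φ u - φ um = g u - a * (u - um) := by
      simp only [hφ, hgum]; ring
    rw [heq] at this
    calc |g u - a * (u - um)| ≤ K * (um - u) * ‖u - um‖ := this
      _ ≤ K * (um - u) ^ 2 := by
          rw [Real.norm_eq_abs, abs_sub_comm, abs_of_nonneg (by linarith [hu.2])]
          nlinarith [hu.2]
  -- positivity of lam
  have hlampos : 0 < lam := by rw [hlam]; exact mul_pos hum hnd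
  -- derivative facts for U and V
  have hUd : ∀ z, HasDerivAt U (U z * g (U z)) z := by
    intro z
    have := (hU.differentiable (by norm_num) z).hasDerivAt
    rwa [hUode z] at this
  have hVpos : ∀ z, 0 < um - U z := fun z => by linarith [(hUrange z).2]
  have hVd : ∀ z, HasDerivAt (fun z => um - U z) (-(U z * g (U z))) z := by
    intro z
    exact (hUd z).const_sub um
  have hlogd : ∀ (c : ℝ) (z : ℝ), HasDerivAt (fun z => Real.log (um - U z) - c * z)
      (-(U z * g (U z)) / (um - U z) - c) z := by
    intro c z
    have h1 : HasDerivAt (fun z => Real.log (um - U z)) ((um - U z)⁻¹ * -(U z * g (U z))) z :=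
      by have := (Real.hasDerivAt_log (ne_of_gt (hVpos z))).comp z (hVd z); exact this
    have h2 : HasDerivAt (fun z : ℝ => c * z) c z := by simpa using (hasDerivAt_id z).const_mul c
    have h3 := h1.sub h2
    rw [div_eq_inv_mul]
    exact h3
  set K' : ℝ := a + um * K with hK'def
  have hK'pos : 0 < K' := by nlinarith
  -- key pointwise estimate (A)
  have hdA : ∀ z, |(-(U z * g (U z)) / (um - U z) - lam)| ≤ K' * (um - U z) := by
    intro z
    obtain ⟨hu0, hu1⟩ := hUrange z
    have hV : (0:ℝ) < um - U z := hVpos z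
    have hRb : |g (U z) - a * (U z - um)| ≤ K * (um - U z) ^ 2 := hTaylor _ ⟨hu0.le, hu1.le⟩
    have hid : -(U z * g (U z)) / (um - U z) - lam
        = -(a * (um - U z)) - U z * (g (U z) - a * (U z - um)) / (um - U z) := by
      rw [hlam]; field_simp; ring
    rw [hid]
    have h2 : |U z * (g (U z) - a * (U z - um)) / (um - U z)| ≤ um * K * (um - U z) := by
      rw [abs_div, abs_mul, abs_of_pos hu0, abs_of_pos hV, div_le_iff₀ hV]
      nlinarith [abs_nonneg (g (U z) - a * (U z - um))]
    have h3 := abs_le.mp h2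
    rw [abs_le]
    constructor <;> nlinarith [h3.1, h3.2]
  -- choose ε, mu, z₀
  set mu : ℝ := lam / 2 with hmudef
  have hmu : 0 < mu := by positivity
  have hεpos : 0 < lam / (2 * K') := by positivity
  obtain ⟨z₀, hz₀⟩ : ∃ z₀ : ℝ, ∀ z ≤ z₀, um - U z < lam / (2 * K') := by
    have ht : Tendsto (fun z => um - U z) atBot (nhds (um - um)) :=
      tendsto_const_nhds.sub hUbot
    rw [sub_self] at ht
    exact eventually_atBot.mp (ht.eventually_lt_const hεpos)
  -- lower bound for log-derivative below z₀
  have hdlow : ∀ z ≤ z₀, 0 ≤ -(U z * g (U z)) / (um - U z) - mu := by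
    intro z hz
    have h1 := abs_le.mp (hdA z)
    have h2 : K' * (um - U z) ≤ lam / 2 := by
      have h3 := (hz₀ z hz).le
      have h4 : K' * (lam / (2 * K')) = lam / 2 := by field_simp
      nlinarith [hK'pos]
    have h5 := h1.1
    rw [hmudef]; linarith
  -- Step A: exponential decay of V below z₀
  have hVdecay : ∀ z ≤ z₀, um - U z ≤ (um - U z₀) * Real.exp (mu * (z - z₀)) := by
    intro z hz
    set w : ℝ → ℝ := fun z => Real.log (um - U z) - mu * z with hwdef
    have hwd : ∀ x, HasDerivAt w (-(U x * g (U x)) / (um - U x) - mu) x := hlogd mu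
    have hwdiff : Differentiable ℝ w := fun x => (hwd x).differentiableAt
    have hwmono : MonotoneOn w (Set.Iic z₀) := by
      apply monotoneOn_of_deriv_nonneg (convex_Iic z₀) hwdiff.continuous.continuousOn
        hwdiff.differentiableOn
      intro x hx
      rw [interior_Iic] at hx
      rw [(hwd x).deriv]
      exact hdlow x hx.le
    have hw := hwmono (Set.mem_Iic.mpr hz) (Set.mem_Iic.mpr le_rfl) hz
    have : Real.log (um - U z) ≤ Real.log (um - U z₀) + mu * (z - z₀) := by
      simp only [hwdef] at hw; linarith
    calc um - U z = Real.exp (Real.log (um - U z)) := (Real.exp_log (hVpos z)).symm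
      _ ≤ Real.exp (Real.log (um - U z₀) + mu * (z - z₀)) := Real.exp_le_exp.mpr this
      _ = (um - U z₀) * Real.exp (mu * (z - z₀)) := by
          rw [Real.exp_add, Real.exp_log (hVpos z₀)]
  -- Step B/C: the shifted log function and its controlled perturbations
  set B : ℝ := K' * (um - U z₀) * Real.exp (-(mu * z₀)) with hBdef
  have hBpos : 0 < B := by
    have := hVpos z₀
    have := Real.exp_pos (-(mu * z₀))
    positivity
  have hhB : ∀ z ≤ z₀, |(-(U z * g (U z)) / (um - U z) - lam)| ≤ B * Real.exp (mu * z) := by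
    intro z hz
    have he : Real.exp (mu * (z - z₀)) = Real.exp (mu * z) * Real.exp (-(mu * z₀)) := by
      rw [← Real.exp_add]; ring_nf
    calc |(-(U z * g (U z)) / (um - U z) - lam)| ≤ K' * (um - U z) := hdA z
      _ ≤ K' * ((um - U z₀) * Real.exp (mu * (z - z₀))) := by
          apply mul_le_mul_of_nonneg_left (hVdecay z hz) hK'pos.le
      _ = B * Real.exp (mu * z) := by rw [hBdef, he]; ring
  have hexpd : ∀ x : ℝ, HasDerivAt (fun z : ℝ => Real.exp (mu * z)) (Real.exp (mu * x) * mu) x := by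
    intro x
    have h1 : HasDerivAt (fun z : ℝ => mu * z) mu x := by simpa using (hasDerivAt_id x).const_mul mu
    exact h1.exp
  have hcoef : ∀ x : ℝ, B / mu * (Real.exp (mu * x) * mu) = B * Real.exp (mu * x) := by
    intro x; field_simp
  set ψ : ℝ → ℝ := fun z => (Real.log (um - U z) - lam * z) + (B / mu) * Real.exp (mu * z)
    with hψdef
  set χ : ℝ → ℝ := fun z => (Real.log (um - U z) - lam * z) - (B / mu) * Real.exp (mu * z)
    with hχdef
  have hψd : ∀ x, HasDerivAt ψ
      ((-(U x * g (U x)) / (um - U x) - lam) + B * Real.exp (mu * x)) x := by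
    intro x
    have := (hlogd lam x).add ((hexpd x).const_mul (B / mu))
    rwa [hcoef x] at this
  have hχd : ∀ x, HasDerivAt χ
      ((-(U x * g (U x)) / (um - U x) - lam) - B * Real.exp (mu * x)) x := by
    intro x
    have := (hlogd lam x).sub ((hexpd x).const_mul (B / mu))
    rwa [hcoef x] at this
  have hψdiff : Differentiable ℝ ψ := fun x => (hψd x).differentiableAt
  have hχdiff : Differentiable ℝ χ := fun x => (hχd x).differentiableAt
  have hψmono : MonotoneOn ψ (Set.Iic z₀) := by
    apply monotoneOn_of_deriv_nonneg (convex_Iic z₀) hψdiff.continuous.continuousOn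
      hψdiff.differentiableOn
    intro x hx
    rw [interior_Iic] at hx
    rw [(hψd x).deriv]
    have := (abs_le.mp (hhB x hx.le)).1
    linarith
  have hχanti : AntitoneOn χ (Set.Iic z₀) := by
    apply antitoneOn_of_deriv_nonpos (convex_Iic z₀) hχdiff.continuous.continuousOn
      hχdiff.differentiableOn
    intro x hx
    rw [interior_Iic] at hx
    rw [(hχd x).deriv]
    have := (abs_le.mp (hhB x hx.le)).2
    linarith
  have hbelow : ∀ z ≤ z₀, χ z₀ ≤ ψ z := by
    intro z hz
    have h1 : χ z₀ ≤ χ z := hχanti (Set.mem_Iic.mpr hz) (Set.mem_Iic.mpr le_rfl) hz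
    have h2 : χ z ≤ ψ z := by
      have : 0 ≤ (B / mu) * Real.exp (mu * z) := by positivity
      simp only [hψdef, hχdef]; linarith
    linarith
  obtain ⟨l, hl⟩ := aux_mono_limit hψmono hbelow
  have hmz : Tendsto (fun z : ℝ => mu * z) atBot atBot := by
    simpa using tendsto_id.const_mul_atBot hmu
  have hexp0 : Tendsto (fun z : ℝ => Real.exp (mu * z)) atBot (nhds 0) :=
    Real.tendsto_exp_atBot.comp hmz
  have hh : Tendsto (fun z => Real.log (um - U z) - lam * z) atBot (nhds l) := by
    have h1 : Tendsto (fun z => ψ z - (B / mu) * Real.exp (mu * z)) atBot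
        (nhds (l - (B / mu) * 0)) := hl.sub (hexp0.const_mul (B / mu))
    rw [mul_zero, sub_zero] at h1
    refine h1.congr fun z => by simp only [hψdef]; ring
  -- the limit L
  refine ⟨Real.exp l, Real.exp_pos l, ?_⟩
  have hfuneq : ∀ z, Real.exp (Real.log (um - U z) - lam * z)
      = Real.exp (-(lam * z)) * (um - U z) := by
    intro z
    rw [Real.exp_sub, Real.exp_log (hVpos z), Real.exp_neg, div_eq_mul_inv, mul_comm]
  have hφt : Tendsto (fun z => Real.exp (-(lam * z)) * (um - U z)) atBot (nhds (Real.exp l)) := by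
    have := (Real.continuous_exp.tendsto l).comp hh
    exact this.congr fun z => hfuneq z
  refine ⟨hφt, ?_⟩
  -- Step E: two-sided bounds on Iic 0
  set φ : ℝ → ℝ := fun z => Real.exp (-(lam * z)) * (um - U z) with hφdef
  have hφpos : ∀ z, 0 < φ z := fun z => mul_pos (Real.exp_pos _) (hVpos z)
  have hφcont : Continuous φ := by
    apply Continuous.mul
    · exact Real.continuous_exp.comp ((continuous_const.mul continuous_id).neg)
    · exact continuous_const.sub (hU.continuous)
  obtain ⟨z₁, hz₁⟩ : ∃ z₁ : ℝ, ∀ z ≤ z₁,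
      Real.exp l / 2 < φ z ∧ φ z < Real.exp l + Real.exp l := by
    have h1 := hφt.eventually_const_lt (half_lt_self (Real.exp_pos l))
    have h2 := hφt.eventually_lt_const (lt_add_of_pos_left (Real.exp l) (Real.exp_pos l))
    exact eventually_atBot.mp (h1.and h2)
  set z₂ : ℝ := min z₁ 0 with hz₂def
  have hz₂0 : z₂ ≤ 0 := min_le_right _ _
  have hne : (Icc z₂ 0).Nonempty := ⟨0, right_mem_Icc.mpr hz₂0⟩
  obtain ⟨p, hp, hpmin⟩ := isCompact_Icc.exists_isMinOn hne hφcont.continuousOn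
  obtain ⟨q, hq, hqmax⟩ := isCompact_Icc.exists_isMaxOn hne hφcont.continuousOn
  refine ⟨min (Real.exp l / 2) (φ p), max (Real.exp l + Real.exp l) (φ q), ?_, ?_, ?_⟩
  · exact lt_min (by positivity) (hφpos p)
  · have h0 : (0:ℝ) ∈ Icc z₂ 0 := right_mem_Icc.mpr hz₂0
    calc min (Real.exp l / 2) (φ p) ≤ φ p := min_le_right _ _
      _ ≤ φ 0 := hpmin h0
      _ ≤ φ q := hqmax h0
      _ ≤ max (Real.exp l + Real.exp l) (φ q) := le_max_right _ _
  · intro z hz0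
    have hVeq : um - U z = φ z * Real.exp (lam * z) := by
      simp only [hφdef]
      rw [Real.exp_neg]
      field_simp
    have hexpz := (Real.exp_pos (lam * z)).le
    have hbnd : min (Real.exp l / 2) (φ p) ≤ φ z ∧ φ z ≤ max (Real.exp l + Real.exp l) (φ q) := by
      rcases le_or_gt z z₂ with hcase | hcase
      · have h := hz₁ z (hcase.trans (min_le_left _ _))
        exact ⟨(min_le_left _ _).trans h.1.le, h.2.le.trans (le_max_left _ _)⟩
      · have hmem : z ∈ Icc z₂ 0 := ⟨hcase.le, hz0⟩
        exact ⟨(min_le_right _ _).trans (hpmin hmem), (hqmax hmem).trans (le_max_right _ _)⟩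
    constructor
    · rw [hVeq]
      exact mul_le_mul_of_nonneg_right hbnd.1 hexpz
    · rw [hVeq]
      exact mul_le_mul_of_nonneg_right hbnd.2 hexpz
end

section
/- Let k₊ ≥ 1 be an integer, let f be (k₊+1)-times continuously differentiable, and let U be a shock profile. Assume the degenerate condition at the right state: g^{(j)}(0) = 0 for 1 ≤ j ≤ k₊ and g^{(k₊+1)}(0) ≠ 0 (in particular f'(0) = s). Then there exist constants 0 < C₁ ≤ C₂ such that C₁·(1+z)^{-1/(1+k₊)} ≤ U(z) ≤ C₂·(1+z)^{-1/(1+k₊)} for all z ≥ 0. -/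
open Filter

open Set in
private lemma idw_eq_stmt6 {m : ℕ} {n : ℕ∞} {g : ℝ → ℝ} (hf : ContDiff ℝ n g) (hmn : (m:ℕ∞) ≤ n)
    {s : Set ℝ} {x : ℝ} (hs : UniqueDiffOn ℝ s) (hx : x ∈ s) :
    iteratedDerivWithin m g s x = iteratedDeriv m g x := by
  have h0 : HasFTaylorSeriesUpToOn n g (ftaylorSeries ℝ g) s :=
    (contDiff_iff_ftaylorSeries.mp hf).hasFTaylorSeriesUpToOn s
  have h1 : iteratedFDerivWithin ℝ m g s x = iteratedFDeriv ℝ m g x :=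
    (h0.eq_iteratedFDerivWithin_of_uniqueDiffOn (by exact_mod_cast hmn) hs hx).symm
  simp [iteratedDerivWithin, iteratedDeriv, h1]

open Set in
private lemma taylor_stmt6 {k : ℕ} {g : ℝ → ℝ} (hg : ContDiff ℝ ((k:ℕ∞) + 1) g)
    (h0 : g 0 = 0) (hdeg : ∀ j : ℕ, 1 ≤ j → j ≤ k → iteratedDeriv j g 0 = 0)
    {u : ℝ} (hu : 0 < u) :
    ∃ ξ ∈ Ioo 0 u, g u = iteratedDeriv (k+1) g ξ * u ^ (k+1) / (k+1).factorial := by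
  have hud : UniqueDiffOn ℝ (Icc (0:ℝ) u) := uniqueDiffOn_Icc hu
  have hk1 : ((k:ℕ∞)) ≤ (k:ℕ∞) + 1 := by exact_mod_cast Nat.le_succ k
  have hcd : ContDiffOn ℝ (k:ℕ∞) g (Icc 0 u) := (hg.of_le (by exact_mod_cast hk1)).contDiffOn
  have hdiff : DifferentiableOn ℝ (iteratedDerivWithin k g (Icc 0 u)) (Ioo 0 u) := by
    have hd : Differentiable ℝ (iteratedDeriv k g) := by
      apply hg.differentiable_iteratedDeriv
      norm_cast
      exact_mod_cast lt_add_one k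
    apply (hd.differentiableOn).congr
    intro x hx
    exact idw_eq_stmt6 hg hk1 hud (Ioo_subset_Icc_self hx)
  have hlag := taylor_mean_remainder_lagrange (n := k) (x₀ := 0) (x := u) hu.ne
    (by rw [Set.uIcc_of_le hu.le]; exact_mod_cast hcd)
    (by rw [Set.uIcc_of_le hu.le, Set.uIoo_of_le hu.le]; exact hdiff)
  rw [Set.uIcc_of_le hu.le, Set.uIoo_of_le hu.le] at hlag
  obtain ⟨ξ, hξ, hval⟩ := hlag
  refine ⟨ξ, hξ, ?_⟩
  have hpoly : taylorWithinEval g k (Icc (0:ℝ) u) 0 u = 0 := by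
    rw [taylor_within_apply]
    apply Finset.sum_eq_zero
    intro j hj
    have hjk : j ≤ k := Nat.lt_succ_iff.mp (Finset.mem_range.mp hj)
    have : iteratedDerivWithin j g (Icc (0:ℝ) u) 0 = 0 := by
      rw [idw_eq_stmt6 hg (by exact_mod_cast le_trans (by exact_mod_cast hjk) hk1) hud
        (left_mem_Icc.mpr hu.le)]
      rcases Nat.eq_zero_or_pos j with h | h
      · simpa [h] using h0
      · exact hdeg j h hjk
    simp [this]
  have hxi : iteratedDerivWithin (k+1) g (Icc (0:ℝ) u) ξ = iteratedDeriv (k+1) g ξ := by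
    exact idw_eq_stmt6 hg (by exact_mod_cast le_rfl) hud (Ioo_subset_Icc_self hξ)
  rw [hpoly, hxi] at hval
  simpa using hval

set_option maxHeartbeats 1000000 in
/-- For a shock profile `U` with the degenerate condition at the right state
(`g⁽ʲ⁾(0) = 0` for `1 ≤ j ≤ k₊` and `g⁽ᵏ⁺⁺¹⁾(0) ≠ 0`), one has the algebraic decay
`C₁·(1+z)^{-1/(1+k₊)} ≤ U(z) ≤ C₂·(1+z)^{-1/(1+k₊)}` for all `z ≥ 0`. -/
theorem stmt_6
    (k : ℕ) (hk : 1 ≤ k)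
    (f : ℝ → ℝ) (hf : ContDiff ℝ (k + 1 : ℕ) f)
    (um : ℝ) (hum : 0 < um)
    (s : ℝ) (hs : s = (f um - f 0) / um)
    (g : ℝ → ℝ) (hg : ∀ u, g u = f u - f 0 - s * u)
    (U : ℝ → ℝ) (hU : ContDiff ℝ 1 U)
    (hUrange : ∀ z, U z ∈ Set.Ioo 0 um)
    (hUode : ∀ z, deriv U z = U z * g (U z))
    (hUbot : Tendsto U atBot (nhds um))
    (hUtop : Tendsto U atTop (nhds 0))
    (hdeg : ∀ j : ℕ, 1 ≤ j → j ≤ k → iteratedDeriv j g 0 = 0)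
    (hdeg' : iteratedDeriv (k + 1) g 0 ≠ 0) :
    ∃ C₁ C₂ : ℝ, 0 < C₁ ∧ C₁ ≤ C₂ ∧
      ∀ z : ℝ, 0 ≤ z →
        C₁ * (1 + z) ^ (-(1 / (1 + (k : ℝ)))) ≤ U z ∧
        U z ≤ C₂ * (1 + z) ^ (-(1 / (1 + (k : ℝ)))) := by
  have Upos : ∀ z, 0 < U z := fun z => (hUrange z).1
  have Ult : ∀ z, U z < um := fun z => (hUrange z).2
  -- smoothness of g
  have hgC : ContDiff ℝ ((k:ℕ∞) + 1) g := by
    have : g = fun u => f u - f 0 - s * u := funext hg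
    rw [this]
    have hf' : ContDiff ℝ ((k:ℕ∞)+1) f := by exact_mod_cast hf
    exact (hf'.sub contDiff_const).sub (contDiff_const.mul contDiff_id)
  have hg0 : g 0 = 0 := by simp [hg]
  set L := iteratedDeriv (k + 1) g 0 with hLdef
  have hFpos : (0:ℝ) < (k+1).factorial := by exact_mod_cast (k+1).factorial_pos
  -- continuity of the (k+1)-st derivative
  have hcont : Continuous (iteratedDeriv (k+1) g) := by
    apply hgC.continuous_iteratedDeriv (k+1)
    norm_cast
  have hLhalf : (0:ℝ) < |L| / 2 := by
    have : (0:ℝ) < |L| := abs_pos.mpr hdeg'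
    linarith
  obtain ⟨δ, hδ, hδball⟩ : ∃ δ > 0, ∀ x : ℝ, dist x 0 < δ →
      dist (iteratedDeriv (k+1) g x) L < |L| / 2 := by
    have h := Metric.continuousAt_iff.mp (hcont.continuousAt (x := 0)) (|L|/2) hLhalf
    obtain ⟨δ, hδ, h⟩ := h
    exact ⟨δ, hδ, fun x hx => h hx⟩
  -- Taylor estimate
  have hTay : ∀ u : ℝ, 0 < u → u < δ → ∃ w : ℝ, |w - L| < |L| / 2 ∧
      g u = w * u ^ (k+1) / (k+1).factorial := by
    intro u hu huδ
    obtain ⟨ξ, hξ, hval⟩ := taylor_stmt6 hgC hg0 hdeg hu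
    refine ⟨iteratedDeriv (k+1) g ξ, ?_, hval⟩
    have : dist ξ 0 < δ := by
      rw [Real.dist_eq, sub_zero, abs_of_pos hξ.1]
      exact lt_trans hξ.2 huδ
    have := hδball ξ this
    rwa [Real.dist_eq] at this
  -- the sign of L must be negative
  have hL : L < 0 := by
    rcases lt_trichotomy L 0 with h | h | h
    · exact h
    · exact absurd h hdeg'
    -- if L > 0, then g > 0 near 0⁺, so U increases, contradicting U → 0
    · exfalso
      have hgpos : ∀ u : ℝ, 0 < u → u < δ → 0 < g u := by
        intro u hu huδ
        obtain ⟨w, hw, hval⟩ := hTay u hu huδ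
        rw [abs_of_pos h] at hw
        rw [abs_lt] at hw
        have hup : (0:ℝ) < u ^ (k+1) := pow_pos hu _
        rw [hval]
        have hwpos : 0 < w := by linarith
        exact div_pos (mul_pos hwpos hup) hFpos
      obtain ⟨z₀, hz₀⟩ : ∃ z₀ : ℝ, ∀ z ≥ z₀, U z < δ := by
        have h := hUtop.eventually (eventually_lt_nhds hδ)
        exact eventually_atTop.mp h
      have hmono : MonotoneOn U (Set.Ici z₀) := by
        apply monotoneOn_of_deriv_nonneg (convex_Ici z₀) (hU.continuous.continuousOn)
          ((hU.differentiable one_ne_zero).differentiableOn)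
        intro x hx
        rw [interior_Ici] at hx
        rw [hUode]
        have : 0 < g (U x) := hgpos _ (Upos x) (hz₀ x (le_of_lt hx))
        exact le_of_lt (mul_pos (Upos x) this)
      have hle : ∀ z ≥ z₀ + 1, U (z₀ + 1) ≤ U z := by
        intro z hz
        exact hmono (by simp : z₀ + 1 ∈ Set.Ici z₀)
          (le_trans (by linarith) hz) hz
      have : U (z₀ + 1) ≤ 0 :=
        ge_of_tendsto hUtop (eventually_atTop.mpr ⟨z₀ + 1, hle⟩)
      exact absurd this (not_le.mpr (Upos _))
  -- quantitative two-sided bound on -g near 0⁺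
  set c₁ : ℝ := (-L) / (2 * (k+1).factorial) with hc₁def
  set c₂ : ℝ := (3 * (-L)) / (2 * (k+1).factorial) with hc₂def
  have hc₁ : 0 < c₁ := by
    apply div_pos (by linarith) (by positivity)
  have hc₂ : 0 < c₂ := by
    apply div_pos (by linarith) (by positivity)
  have hc₁₂ : c₁ ≤ c₂ := by
    apply div_le_div_of_nonneg_right ?_ (by positivity)
    · linarith
  have hgbound : ∀ u : ℝ, 0 < u → u < δ →
      c₁ * u ^ (k+1) ≤ -g u ∧ -g u ≤ c₂ * u ^ (k+1) := by
    intro u hu huδ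
    obtain ⟨w, hw, hval⟩ := hTay u hu huδ
    rw [abs_of_neg hL, abs_lt] at hw
    have hup : (0:ℝ) < u ^ (k+1) := pow_pos hu _
    rw [hval, hc₁def, hc₂def]
    have hrw : -(w * u ^ (k+1) / ((k+1).factorial : ℝ)) = (-w) * u ^ (k+1) / (k+1).factorial := by
      ring
    have hupF : (0:ℝ) < u ^ (k+1) * (k+1).factorial := mul_pos hup hFpos
    constructor
    · rw [hrw, div_mul_eq_mul_div, div_le_div_iff₀ (by positivity) hFpos]
      have key := mul_le_mul_of_nonneg_right (show w ≤ L/2 by linarith [hw.2]) hupF.le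
      nlinarith [key]
    · rw [hrw, div_mul_eq_mul_div, div_le_div_iff₀ hFpos (by positivity)]
      have key := mul_le_mul_of_nonneg_right (show 3/2*L ≤ w by linarith [hw.1]) hupF.le
      nlinarith [key]
  -- choose z₁ ≥ 0 beyond which U < δ
  obtain ⟨z₀, hz₀⟩ : ∃ z₀ : ℝ, ∀ z ≥ z₀, U z < δ := by
    have h := hUtop.eventually (eventually_lt_nhds hδ)
    exact eventually_atTop.mp h
  set z₁ : ℝ := max z₀ 0 with hz₁def
  have hz₁0 : 0 ≤ z₁ := le_max_right _ _
  have hz₁δ : ∀ z ≥ z₁, U z < δ := fun z hz => hz₀ z (le_trans (le_max_left _ _) hz)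
  -- the function V = U^{-(k+1)}
  set V : ℝ → ℝ := fun z => ((U z) ^ (k+1))⁻¹ with hVdef
  have hVpos : ∀ z, 0 < V z := fun z => by
    have := pow_pos (Upos z) (k+1); positivity
  have hUd : ∀ z, HasDerivAt U (U z * g (U z)) z := by
    intro z
    have h := ((hU.differentiable one_ne_zero) z).hasDerivAt
    rwa [hUode] at h
  have hVd : ∀ z, HasDerivAt V ((k+1 : ℝ) * (-g (U z)) / (U z) ^ (k+1)) z := by
    intro z
    have hne : U z ≠ 0 := ne_of_gt (Upos z)
    have h := ((hUd z).pow (k+1)).inv (pow_ne_zero _ hne)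
    refine HasDerivAt.congr_deriv h ?_
    symm
    have h2 : ((k+1 : ℕ) : ℝ) = (k+1 : ℝ) := by push_cast; ring
    rw [h2]
    simp only [Nat.add_sub_cancel, Pi.pow_apply]
    field_simp
    ring
  have hVcont : Continuous V := by
    apply Continuous.inv₀ ((hU.continuous).pow (k+1))
    exact fun z => pow_ne_zero _ (ne_of_gt (Upos z))
  set a : ℝ := (k+1 : ℝ) * c₁ with hadef
  set b : ℝ := (k+1 : ℝ) * c₂ with hbdef
  have ha : 0 < a := by positivity
  have hb : 0 < b := by positivity
  have hab : a ≤ b := by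
    apply mul_le_mul_of_nonneg_left hc₁₂ (by positivity)
  -- derivative bounds for z ≥ z₁
  have hVderiv : ∀ z ≥ z₁, a ≤ deriv V z ∧ deriv V z ≤ b := by
    intro z hz
    have hP : (0:ℝ) < (U z) ^ (k+1) := pow_pos (Upos z) _
    obtain ⟨hlow, hhigh⟩ := hgbound (U z) (Upos z) (hz₁δ z hz)
    rw [(hVd z).deriv]
    constructor
    · rw [hadef, le_div_iff₀ hP]
      nlinarith
    · rw [hbdef, div_le_iff₀ hP]
      nlinarith
  -- V grows linearly on [z₁, ∞)
  have hVlin : ∀ z ≥ z₁, V z₁ + a * (z - z₁) ≤ V z ∧ V z ≤ V z₁ + b * (z - z₁) := by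
    have hW₁d : ∀ x, HasDerivAt (fun z => V z - a * z) (deriv V x - a) x := by
      intro x
      exact ((hVd x).deriv ▸ (hVd x)).sub (by simpa using (hasDerivAt_id x).const_mul a)
    have hW₂d : ∀ x, HasDerivAt (fun z => V z - b * z) (deriv V x - b) x := by
      intro x
      exact ((hVd x).deriv ▸ (hVd x)).sub (by simpa using (hasDerivAt_id x).const_mul b)
    have hW₁c : Continuous (fun z => V z - a * z) :=
      hVcont.sub (continuous_const.mul continuous_id)
    have hW₂c : Continuous (fun z => V z - b * z) :=
      hVcont.sub (continuous_const.mul continuous_id)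
    have hmono : MonotoneOn (fun z => V z - a * z) (Set.Ici z₁) := by
      apply monotoneOn_of_deriv_nonneg (convex_Ici z₁) hW₁c.continuousOn
        (fun x _ => ((hW₁d x).differentiableAt).differentiableWithinAt)
      intro x hx
      rw [interior_Ici] at hx
      rw [(hW₁d x).deriv]
      have := (hVderiv x (le_of_lt hx)).1
      linarith
    have hanti : AntitoneOn (fun z => V z - b * z) (Set.Ici z₁) := by
      apply antitoneOn_of_deriv_nonpos (convex_Ici z₁) hW₂c.continuousOn
        (fun x _ => ((hW₂d x).differentiableAt).differentiableWithinAt)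
      intro x hx
      rw [interior_Ici] at hx
      rw [(hW₂d x).deriv]
      have := (hVderiv x (le_of_lt hx)).2
      linarith
    intro z hz
    have h1 := hmono Set.self_mem_Ici hz hz
    have h2 := hanti Set.self_mem_Ici hz hz
    dsimp only at h1 h2
    constructor <;> linarith
  -- bounds on [0, z₁]
  obtain ⟨xM, hxM, hM⟩ := (isCompact_Icc (a := (0:ℝ)) (b := z₁)).exists_isMaxOn
    (Set.nonempty_Icc.mpr hz₁0) (hVcont.continuousOn)
  set M : ℝ := V xM with hMdef
  have hMpos : 0 < M := hVpos xM
  set m : ℝ := (um ^ (k+1))⁻¹ with hmdef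
  have hmpos : 0 < m := by positivity
  have hmV : ∀ z, m ≤ V z := by
    intro z
    apply inv_anti₀ (pow_pos (Upos z) _)
    exact pow_le_pow_left₀ (Upos z).le (Ult z).le _
  -- global linear bounds A(1+z) ≤ V z ≤ B(1+z)
  set A : ℝ := min (min (V z₁ / (1 + z₁)) a) (m / (1 + z₁)) with hAdef
  set B : ℝ := max (V z₁ + b) M with hBdef
  have h1z₁ : (0:ℝ) < 1 + z₁ := by linarith
  have hApos : 0 < A := by
    apply lt_min (lt_min (div_pos (hVpos z₁) h1z₁) ha) (div_pos hmpos h1z₁)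
  have hBpos : 0 < B := lt_of_lt_of_le (by linarith [hVpos z₁]) (le_max_left _ _)
  have hABle : A ≤ B := by
    have h1 : A ≤ V z₁ / (1 + z₁) := le_trans (min_le_left _ _) (min_le_left _ _)
    have h2 : V z₁ / (1 + z₁) ≤ V z₁ := by
      apply div_le_self (hVpos z₁).le (by linarith)
    have h3 : V z₁ ≤ V z₁ + b := by linarith
    exact le_trans h1 (le_trans h2 (le_trans h3 (le_max_left _ _)))
  have hVbound : ∀ z, 0 ≤ z → A * (1 + z) ≤ V z ∧ V z ≤ B * (1 + z) := by
    intro z hz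
    have h1z : (0:ℝ) < 1 + z := by linarith
    rcases le_or_gt z₁ z with hcase | hcase
    · obtain ⟨hlow, hhigh⟩ := hVlin z hcase
      constructor
      · have hA1 : A ≤ V z₁ / (1 + z₁) := le_trans (min_le_left _ _) (min_le_left _ _)
        have hA2 : A ≤ a := le_trans (min_le_left _ _) (min_le_right _ _)
        have hA3 : A * (1 + z₁) ≤ V z₁ := by
          rw [← le_div_iff₀ h1z₁]; exact hA1
        nlinarith [sub_nonneg.mpr hcase]
      · have hB1 : V z₁ + b ≤ B := le_max_left _ _
        nlinarith [hVpos z₁, sub_nonneg.mpr hcase]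
    · have hzIcc : z ∈ Set.Icc (0:ℝ) z₁ := ⟨hz, hcase.le⟩
      constructor
      · have hA1 : A ≤ m / (1 + z₁) := min_le_right _ _
        have : A * (1 + z) ≤ (m / (1 + z₁)) * (1 + z₁) := by
          apply mul_le_mul hA1 (by linarith) h1z.le (by positivity)
        rw [div_mul_cancel₀ _ (ne_of_gt h1z₁)] at this
        exact le_trans this (hmV z)
      · have hB1 : V z ≤ M := hM hzIcc
        have hB2 : M ≤ B := le_max_right _ _
        nlinarith
  -- convert to the rpow statement
  set e : ℝ := -(1 / (1 + (k:ℝ))) with hedef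
  have hk1pos : (0:ℝ) < 1 + (k:ℝ) := by positivity
  have hek : e * ((k+1 : ℕ) : ℝ) = -1 := by
    rw [hedef]
    push_cast
    field_simp
    ring
  refine ⟨B ^ e, A ^ e, Real.rpow_pos_of_pos hBpos e, ?_, ?_⟩
  · exact Real.rpow_le_rpow_of_nonpos hApos hABle (by rw [hedef]; exact neg_nonpos.mpr (by positivity))
  · intro z hz
    have h1z : (0:ℝ) < 1 + z := by linarith
    obtain ⟨hlow, hhigh⟩ := hVbound z hz
    have hUpow : (U z) ^ (k+1) = (V z)⁻¹ := by rw [hVdef]; simp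
    constructor
    · rw [← Real.mul_rpow hBpos.le h1z.le]
      have hbase : (0:ℝ) < B * (1 + z) := by positivity
      rw [← pow_le_pow_iff_left₀ (Real.rpow_nonneg hbase.le e) (Upos z).le
        (Nat.succ_ne_zero k), ← Real.rpow_natCast ((B * (1+z)) ^ e) (k+1),
        ← Real.rpow_mul hbase.le, hek, Real.rpow_neg_one, hUpow]
      exact inv_anti₀ (hVpos z) hhigh
    · rw [← Real.mul_rpow hApos.le h1z.le]
      have hbase : (0:ℝ) < A * (1 + z) := by positivity
      rw [← pow_le_pow_iff_left₀ (Upos z).le (Real.rpow_nonneg hbase.le e)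
        (Nat.succ_ne_zero k), ← Real.rpow_natCast ((A * (1+z)) ^ e) (k+1),
        ← Real.rpow_mul hbase.le, hek, Real.rpow_neg_one, hUpow]
      exact inv_anti₀ hbase hlow
end

section
/- Let k₋ ≥ 1 be an integer, let f be (k₋+1)-times continuously differentiable, and let U be a shock profile. Assume the degenerate condition at the left state: g^{(j)}(u_-) = 0 for 1 ≤ j ≤ k₋ and g^{(k₋+1)}(u_-) ≠ 0 (in particular f'(u_-) = s). Then there exist constants 0 < C₁ ≤ C₂ such that C₁·(1+|z|)^{-1/k₋} ≤ u_- - U(z) ≤ C₂·(1+|z|)^{-1/k₋} for all z ≤ 0. -/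
open Filter Set Nat

lemma stmt7_iterDW_eq {n : ℕ} {f : ℝ → ℝ} (hf : ContDiff ℝ (n : ℕ) f)
    {s : Set ℝ} (hs : UniqueDiffOn ℝ s) :
    ∀ m : ℕ, m ≤ n → Set.EqOn (iteratedDerivWithin m f s) (iteratedDeriv m f) s := by
  intro m
  induction m with
  | zero => intro _ x hx; simp
  | succ m IH =>
    intro hm x hx
    rw [iteratedDerivWithin_succ, iteratedDeriv_succ,
      derivWithin_congr (IH (le_trans (Nat.le_succ m) hm)) (IH (le_trans (Nat.le_succ m) hm) hx)]
    exact DifferentiableAt.derivWithin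
      ((hf.differentiable_iteratedDeriv m (by exact_mod_cast hm)) x) (hs x hx)

lemma stmt7_taylor {k : ℕ} {g : ℝ → ℝ} (hgc : ContDiff ℝ ((k+1 : ℕ) : ℕ) g) {um : ℝ}
    (h0 : g um = 0) (hj : ∀ j, 1 ≤ j → j ≤ k → iteratedDeriv j g um = 0)
    {u : ℝ} (hu : u < um) :
    ∃ c ∈ Set.Ioo u um,
      g u = (-1 : ℝ)^(k+1) * iteratedDeriv (k+1) g c * (um - u)^(k+1) / (k+1)! := by
  set G : ℝ → ℝ := fun x => g (2*um - x) with hGdef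
  have hGc : ContDiff ℝ ((k+1 : ℕ) : ℕ) G :=
    hgc.comp (contDiff_const.sub contDiff_id)
  have hGd : ∀ n : ℕ, ∀ x : ℝ, iteratedDeriv n G x = (-1 : ℝ)^n * iteratedDeriv n g (2*um - x) := by
    intro n x
    set g₁ : ℝ → ℝ := fun y => g (2*um + y) with hg₁
    have h1 : G = fun x => g₁ (-x) := by
      funext y; simp [hGdef, hg₁, sub_eq_add_neg]
    rw [h1, iteratedDeriv_comp_neg n g₁ x, hg₁, iteratedDeriv_comp_const_add]
    simp [sub_eq_add_neg, smul_eq_mul]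
  have hlt : um < 2*um - u := by linarith
  have hud : UniqueDiffOn ℝ (Icc um (2*um - u)) := uniqueDiffOn_Icc hlt
  have heq := stmt7_iterDW_eq hGc hud
  have hdiffG : Differentiable ℝ (iteratedDeriv k G) :=
    hGc.differentiable_iteratedDeriv k (by exact_mod_cast Nat.lt_succ_self k)
  obtain ⟨x', hx', hT⟩ := taylor_mean_remainder_lagrange (f := G) (n := k) (ne_of_lt hlt)
    hGc.of_succ.contDiffOn
    (by rw [Set.uIcc_of_le hlt.le, Set.uIoo_of_le hlt.le]; exact (hdiffG.differentiableOn.congr (fun y hy => heq k (Nat.le_succ k) (Ioo_subset_Icc_self hy))))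
  rw [Set.uIoo_of_le hlt.le] at hx'
  rw [Set.uIcc_of_le hlt.le] at hT
  obtain ⟨hx1, hx2⟩ := hx'
  refine ⟨2*um - x', ⟨by linarith, by linarith⟩, ?_⟩
  have hTay : taylorWithinEval G k (Icc um (2*um-u)) um (2*um-u) = 0 := by
    rw [taylor_within_apply]
    apply Finset.sum_eq_zero
    intro j hj'
    have hjk : j ≤ k + 1 := by
      simp only [Finset.mem_range] at hj'; omega
    have hmem : um ∈ Icc um (2*um - u) := ⟨le_refl _, le_of_lt hlt⟩
    rw [heq j hjk hmem, hGd j um]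
    rcases Nat.eq_zero_or_pos j with h | h
    · subst h; simp [hGdef, show 2*um - um = um by ring, h0]
    · have hjk' : j ≤ k := by simp only [Finset.mem_range] at hj'; omega
      rw [show 2*um - um = um by ring, hj j h hjk']
      simp
  rw [hTay, sub_zero] at hT
  have hGu : G (2*um - u) = g u := by show g (2*um - (2*um - u)) = g u; norm_num
  have hx'mem : x' ∈ Icc um (2*um-u) := ⟨le_of_lt hx1, le_of_lt hx2⟩
  rw [hGu] at hT
  rw [hT, heq (k+1) le_rfl hx'mem, hGd (k+1) x']
  ring_nf

/-- For a shock profile `U` with the degenerate condition at the left state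
(`g⁽ʲ⁾(u₋) = 0` for `1 ≤ j ≤ k₋` and `g⁽ᵏ⁻⁺¹⁾(u₋) ≠ 0`), one has the algebraic rate
`C₁·(1+|z|)^{-1/k₋} ≤ u₋ - U(z) ≤ C₂·(1+|z|)^{-1/k₋}` for all `z ≤ 0`. -/
theorem stmt_7
    (k : ℕ) (hk : 1 ≤ k)
    (f : ℝ → ℝ) (hf : ContDiff ℝ (k + 1 : ℕ) f)
    (um : ℝ) (hum : 0 < um)
    (s : ℝ) (hs : s = (f um - f 0) / um)
    (g : ℝ → ℝ) (hg : ∀ u, g u = f u - f 0 - s * u)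
    (U : ℝ → ℝ) (hU : ContDiff ℝ 1 U)
    (hUrange : ∀ z, U z ∈ Set.Ioo 0 um)
    (hUode : ∀ z, deriv U z = U z * g (U z))
    (hUbot : Tendsto U atBot (nhds um))
    (hUtop : Tendsto U atTop (nhds 0))
    (hdeg : ∀ j : ℕ, 1 ≤ j → j ≤ k → iteratedDeriv j g um = 0)
    (hdeg' : iteratedDeriv (k + 1) g um ≠ 0) :
    ∃ C₁ C₂ : ℝ, 0 < C₁ ∧ C₁ ≤ C₂ ∧
      ∀ z : ℝ, z ≤ 0 →
        C₁ * (1 + |z|) ^ (-(1 / (k : ℝ))) ≤ um - U z ∧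
        um - U z ≤ C₂ * (1 + |z|) ^ (-(1 / (k : ℝ))) := by
  have hkR : (0:ℝ) < k := by exact_mod_cast hk
  have hgc : ContDiff ℝ ((k+1 : ℕ) : ℕ) g := by
    have hgfun : g = fun u => f u - f 0 - s * u := funext hg
    rw [hgfun]
    exact (hf.sub contDiff_const).sub (contDiff_const.mul contDiff_id)
  have hgum : g um = 0 := by
    rw [hg, hs]; field_simp; ring
  set a := iteratedDeriv (k+1) g um with ha
  have haC : ContinuousAt (iteratedDeriv (k+1) g) um :=
    (hgc.continuous_iteratedDeriv (k+1) le_rfl).continuousAt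
  have hane : a ≠ 0 := hdeg'
  obtain ⟨δ₀, hδ₀pos, hδ₀⟩ := Metric.continuousAt_iff.mp haC (|a|/2)
    (by positivity)
  set δ := min δ₀ (um/2) with hδdef
  have hδpos : 0 < δ := lt_min hδ₀pos (by linarith)
  have hδle : δ ≤ um/2 := min_le_right _ _
  have hδle' : δ ≤ δ₀ := min_le_left _ _
  set b : ℝ := (-1:ℝ)^(k+1) * a with hb
  have hbne : b ≠ 0 := mul_ne_zero (pow_ne_zero _ (by norm_num)) hane
  have habs : |b| = |a| := by
    rw [hb, abs_mul, abs_pow, abs_neg, abs_one, one_pow, one_mul]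
  set Q : ℝ := ((k+1)! : ℝ) with hQdef
  have hQpos : (0:ℝ) < Q := by
    rw [hQdef]; exact_mod_cast Nat.factorial_pos (k+1)
  -- key two-sided estimate
  have key : ∀ u, um - δ < u → u < um →
      (b - |b|/2) * (um-u)^(k+1) / Q ≤ g u ∧
      g u ≤ (b + |b|/2) * (um-u)^(k+1) / Q := by
    intro u h1 h2
    obtain ⟨c, hc, hgu⟩ := stmt7_taylor hgc hgum hdeg h2
    have hcd : dist c um < δ₀ := by
      rw [Real.dist_eq, abs_lt]
      constructor
      · have := hc.1; linarith
      · linarith [hc.2]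
    have hest := hδ₀ hcd
    rw [Real.dist_eq] at hest
    have hD : |(-1:ℝ)^(k+1) * iteratedDeriv (k+1) g c - b| < |b|/2 := by
      rw [hb, ← mul_sub, abs_mul, abs_pow, abs_neg, abs_one, one_pow, one_mul, habs]
      exact hest
    obtain ⟨hD1, hD2⟩ := abs_lt.mp hD
    have hpow : (0:ℝ) ≤ (um-u)^(k+1) / Q :=
      div_nonneg (le_of_lt (pow_pos (by linarith) _)) (le_of_lt hQpos)
    constructor
    · rw [hgu]
      rw [mul_div_assoc, mul_div_assoc]
      exact mul_le_mul_of_nonneg_right (by linarith) hpow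
    · rw [hgu]
      rw [mul_div_assoc, mul_div_assoc]
      exact mul_le_mul_of_nonneg_right (by linarith) hpow
  -- z far left: U z close to um
  have hev : ∀ᶠ z in atBot, um - δ < U z :=
    hUbot.eventually (eventually_gt_nhds (by linarith))
  obtain ⟨Z', hZ'⟩ := eventually_atBot.mp hev
  set Z₀ := min Z' 0 with hZ₀def
  have hZ₀0 : Z₀ ≤ 0 := min_le_right _ _
  have hUnear : ∀ z ≤ Z₀, um - δ < U z :=
    fun z hz => hZ' z (le_trans hz (min_le_left _ _))
  -- b is negative
  have hbneg : b < 0 := by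
    by_contra hpos
    push_neg at hpos
    have hbpos : 0 < b := lt_of_le_of_ne hpos (Ne.symm hbne)
    have habsb : |b| = b := abs_of_pos hbpos
    have hUpos : ∀ z ∈ interior (Iic Z₀), 0 < deriv U z := by
      intro z hz
      rw [interior_Iic] at hz
      have h1 := hUnear z (le_of_lt hz)
      have h2 := (hUrange z).2
      have hK := (key (U z) h1 h2).1
      rw [habsb] at hK
      have hpowpos : (0:ℝ) < (um - U z)^(k+1) / Q := by
        apply _root_.div_pos (pow_pos (by linarith) _) hQpos
      have hgpos : 0 < g (U z) := by
        have h5 : (0:ℝ) < (b - b/2) * ((um - U z)^(k+1) / Q) :=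
          mul_pos (by linarith) hpowpos
        rw [← mul_div_assoc] at h5
        exact lt_of_lt_of_le h5 hK
      rw [hUode]
      exact mul_pos (hUrange z).1 hgpos
    have hmono : StrictMonoOn U (Iic Z₀) :=
      strictMonoOn_of_deriv_pos (convex_Iic Z₀) hU.continuous.continuousOn hUpos
    have hle : ∀ᶠ z in atBot, U z ≤ U (Z₀ - 1) := by
      rw [eventually_atBot]
      refine ⟨Z₀ - 1, fun z hz => ?_⟩
      exact hmono.monotoneOn (show z ∈ Iic Z₀ by simp; linarith)
        (show Z₀ - 1 ∈ Iic Z₀ by simp) hz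
    have := le_of_tendsto hUbot hle
    linarith [(hUrange (Z₀-1)).2]
  have habsb : |b| = -b := abs_of_neg hbneg
  have hnbpos : 0 < -b := by linarith
  -- derivative bounds for v = um - U
  set c₁ : ℝ := (um/2) * (-b/2) / Q with hc₁def
  set c₂ : ℝ := um * (-(3*b)/2) / Q with hc₂def
  have hc₁pos : 0 < c₁ := by
    apply _root_.div_pos (mul_pos (by linarith) (by linarith)) hQpos
  have hc₂pos : 0 < c₂ := by
    apply _root_.div_pos (mul_pos hum (by linarith)) hQpos
  set v : ℝ → ℝ := fun z => um - U z with hvdef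
  have hvpos : ∀ z, 0 < v z := fun z => sub_pos.mpr (hUrange z).2
  have hvlt : ∀ z, v z < um := fun z => by
    have := (hUrange z).1; simp only [hvdef]; linarith
  have hUd : ∀ z, HasDerivAt U (U z * g (U z)) z := by
    intro z
    have h := ((hU.differentiable one_ne_zero) z).hasDerivAt
    rwa [hUode z] at h
  have hvd : ∀ z, HasDerivAt v (-(U z * g (U z))) z := by
    intro z
    have h := (hasDerivAt_const z um).sub (hUd z)
    exact (hUd z).const_sub um
  have hgneg : ∀ z ≤ Z₀, -g (U z) ≥ (-b/2) * (v z)^(k+1) / Q := by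
    intro z hz
    have h1 := hUnear z hz
    have h2 := (hUrange z).2
    have hK := (key (U z) h1 h2).2
    rw [habsb] at hK
    have : b + -b/2 = b/2 := by ring
    rw [this] at hK
    have : (-b/2) * (v z)^(k+1) / Q = -((b/2) * (um - U z)^(k+1) / Q) := by
      simp only [hvdef]; ring
    rw [this]
    linarith
  have hgnn : ∀ z ≤ Z₀, 0 ≤ -g (U z) := by
    intro z hz
    refine le_trans ?_ (hgneg z hz)
    apply div_nonneg _ (le_of_lt hQpos)
    exact mul_nonneg (by linarith) (le_of_lt (pow_pos (hvpos z) _))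
  have hDlb : ∀ z ≤ Z₀, c₁ * (v z)^(k+1) ≤ -(U z * g (U z)) := by
    intro z hz
    have hU2 : um/2 ≤ U z := by
      have := hUnear z hz; linarith [hδle]
    calc c₁ * (v z)^(k+1) = (um/2) * ((-b/2) * (v z)^(k+1) / Q) := by
          rw [hc₁def]; ring
      _ ≤ U z * (-g (U z)) := by
          apply mul_le_mul hU2 (hgneg z hz) _ (by linarith [(hUrange z).1])
          apply div_nonneg _ (le_of_lt hQpos)
          exact mul_nonneg (by linarith) (le_of_lt (pow_pos (hvpos z) _))
      _ = -(U z * g (U z)) := by ring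
  have hDub : ∀ z ≤ Z₀, -(U z * g (U z)) ≤ c₂ * (v z)^(k+1) := by
    intro z hz
    have h1 := hUnear z hz
    have h2 := (hUrange z).2
    have hK := (key (U z) h1 h2).1
    rw [habsb] at hK
    have he : b - -b/2 = 3*b/2 := by ring
    rw [he] at hK
    have hgub : -g (U z) ≤ (-(3*b)/2) * (v z)^(k+1) / Q := by
      have : (-(3*b)/2) * (v z)^(k+1) / Q = -((3*b/2) * (um - U z)^(k+1) / Q) := by
        simp only [hvdef]; ring
      rw [this]
      linarith
    calc -(U z * g (U z)) = U z * (-g (U z)) := by ring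
      _ ≤ um * ((-(3*b)/2) * (v z)^(k+1) / Q) :=
          mul_le_mul (le_of_lt (hUrange z).2) hgub (hgnn z hz) (le_of_lt hum)
      _ = c₂ * (v z)^(k+1) := by rw [hc₂def]; ring
  -- w = v^(-k)
  set w : ℝ → ℝ := fun z => (v z) ^ (-(k:ℤ)) with hwdef
  have hwpos : ∀ z, 0 < w z := fun z => zpow_pos (hvpos z) _
  have hwd : ∀ z, HasDerivAt w
      ((-(k:ℝ) * (v z)^(-(k:ℤ)-1)) * (-(U z * g (U z)))) z := by
    intro z
    have h := (hasDerivAt_zpow (-(k:ℤ)) (v z) (Or.inl (ne_of_gt (hvpos z)))).comp z (hvd z)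
    have hcast : ((-(k:ℤ) : ℤ) : ℝ) = -(k:ℝ) := by push_cast; ring
    rw [hcast] at h
    exact h
  have hpvpos : ∀ z, (0:ℝ) < (v z)^(-(k:ℤ)-1) := fun z => zpow_pos (hvpos z) _
  have hpv : ∀ z, (v z)^(-(k:ℤ)-1) * (v z)^(k+1) = 1 := by
    intro z
    rw [← zpow_natCast (v z) (k+1), ← zpow_add₀ (ne_of_gt (hvpos z))]
    norm_num
  -- bounds on deriv w for z ≤ Z₀
  have hwd_ub : ∀ z ≤ Z₀, deriv w z ≤ -((k:ℝ) * c₁) := by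
    intro z hz
    rw [(hwd z).deriv]
    have h1 : (k:ℝ) * ((v z)^(-(k:ℤ)-1)) * (c₁ * (v z)^(k+1)) ≤
        (k:ℝ) * ((v z)^(-(k:ℤ)-1)) * (-(U z * g (U z))) :=
      mul_le_mul_of_nonneg_left (hDlb z hz)
        (mul_nonneg (le_of_lt hkR) (le_of_lt (hpvpos z)))
    have h2 : (k:ℝ) * ((v z)^(-(k:ℤ)-1)) * (c₁ * (v z)^(k+1)) = (k:ℝ) * c₁ := by
      have : (k:ℝ) * ((v z)^(-(k:ℤ)-1)) * (c₁ * (v z)^(k+1))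
          = (k:ℝ) * c₁ * ((v z)^(-(k:ℤ)-1) * (v z)^(k+1)) := by ring
      rw [this, hpv z, mul_one]
    push_cast
    linarith [h1, h2]
  have hwd_lb : ∀ z ≤ Z₀, -((k:ℝ) * c₂) ≤ deriv w z := by
    intro z hz
    rw [(hwd z).deriv]
    have h1 : (k:ℝ) * ((v z)^(-(k:ℤ)-1)) * (-(U z * g (U z))) ≤
        (k:ℝ) * ((v z)^(-(k:ℤ)-1)) * (c₂ * (v z)^(k+1)) :=
      mul_le_mul_of_nonneg_left (hDub z hz)
        (mul_nonneg (le_of_lt hkR) (le_of_lt (hpvpos z)))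
    have h2 : (k:ℝ) * ((v z)^(-(k:ℤ)-1)) * (c₂ * (v z)^(k+1)) = (k:ℝ) * c₂ := by
      have : (k:ℝ) * ((v z)^(-(k:ℤ)-1)) * (c₂ * (v z)^(k+1))
          = (k:ℝ) * c₂ * ((v z)^(-(k:ℤ)-1) * (v z)^(k+1)) := by ring
      rw [this, hpv z, mul_one]
    push_cast
    linarith [h1, h2]
  have hwdiff : Differentiable ℝ w := fun z => (hwd z).differentiableAt
  -- integrate: ph₁ antitone, ph₂ monotone on Iic Z₀
  have hwlb : ∀ z ≤ Z₀, w Z₀ + (k:ℝ)*c₁*(Z₀ - z) ≤ w z := by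
    intro z hz
    set ph : ℝ → ℝ := fun z => w z + (k:ℝ)*c₁*z with hphdef
    have hphd : ∀ x, HasDerivAt ph (deriv w x + (k:ℝ)*c₁) x := by
      intro x
      exact ((hwdiff x).hasDerivAt).add
        (by simpa using (hasDerivAt_id x).const_mul ((k:ℝ)*c₁))
    have hphdiff : Differentiable ℝ ph := fun x => (hphd x).differentiableAt
    have hanti : AntitoneOn ph (Iic Z₀) := by
      apply antitoneOn_of_deriv_nonpos (convex_Iic Z₀) hphdiff.continuous.continuousOn
        hphdiff.differentiableOn
      intro x hx
      rw [interior_Iic] at hx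
      rw [(hphd x).deriv]
      have := hwd_ub x (le_of_lt hx)
      linarith
    have := hanti (show z ∈ Iic Z₀ from hz) (mem_Iic.mpr (le_refl Z₀)) hz
    simp only [hphdef] at this
    linarith
  have hwub : ∀ z ≤ Z₀, w z ≤ w Z₀ + (k:ℝ)*c₂*(Z₀ - z) := by
    intro z hz
    set ph : ℝ → ℝ := fun z => w z + (k:ℝ)*c₂*z with hphdef
    have hphd : ∀ x, HasDerivAt ph (deriv w x + (k:ℝ)*c₂) x := by
      intro x
      exact ((hwdiff x).hasDerivAt).add
        (by simpa using (hasDerivAt_id x).const_mul ((k:ℝ)*c₂))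
    have hphdiff : Differentiable ℝ ph := fun x => (hphd x).differentiableAt
    have hmono : MonotoneOn ph (Iic Z₀) := by
      apply monotoneOn_of_deriv_nonneg (convex_Iic Z₀) hphdiff.continuous.continuousOn
        hphdiff.differentiableOn
      intro x hx
      rw [interior_Iic] at hx
      rw [(hphd x).deriv]
      have := hwd_lb x (le_of_lt hx)
      linarith
    have := hmono (show z ∈ Iic Z₀ from hz) (mem_Iic.mpr (le_refl Z₀)) hz
    simp only [hphdef] at this
    linarith
  -- linear bounds on w
  set A : ℝ := w Z₀ with hAdef
  have hApos : 0 < A := hwpos Z₀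
  have h1Z : (0:ℝ) < 1 - Z₀ := by linarith
  set ε : ℝ := min (A/(1-Z₀)) ((k:ℝ)*c₁) with hεdef
  have hεpos : 0 < ε := lt_min (div_pos hApos h1Z) (mul_pos hkR hc₁pos)
  set M : ℝ := max A ((k:ℝ)*c₂) with hMdef
  have hMpos : 0 < M := lt_of_lt_of_le hApos (le_max_left _ _)
  have hfar : ∀ z ≤ Z₀, ε*(1+|z|) ≤ w z ∧ w z ≤ M*(1+|z|) := by
    intro z hz
    have hz0 : z ≤ 0 := le_trans hz hZ₀0
    have habsz : |z| = -z := abs_of_nonpos hz0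
    constructor
    · have h1 : ε*(1-Z₀) ≤ A := by
        calc ε*(1-Z₀) ≤ (A/(1-Z₀))*(1-Z₀) :=
              mul_le_mul_of_nonneg_right (min_le_left _ _) (by linarith)
          _ = A := div_mul_cancel₀ _ (ne_of_gt h1Z)
      have h2 : ε*(Z₀ - z) ≤ (k:ℝ)*c₁*(Z₀-z) :=
        mul_le_mul_of_nonneg_right (min_le_right _ _) (by linarith)
      have h3 := hwlb z hz
      have hexp : ε*(1 + -z) = ε*(1-Z₀) + ε*(Z₀ - z) := by ring
      rw [habsz, hexp]
      linarith
    · have h1 : A ≤ M*(1-Z₀) := by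
        calc A ≤ M := le_max_left _ _
          _ = M*1 := by ring
          _ ≤ M*(1-Z₀) := mul_le_mul_of_nonneg_left (by linarith) (le_of_lt hMpos)
      have h2 : (k:ℝ)*c₂*(Z₀-z) ≤ M*(Z₀-z) :=
        mul_le_mul_of_nonneg_right (le_max_right _ _) (by linarith)
      have h3 := hwub z hz
      have hexp : M*(1 + -z) = M*(1-Z₀) + M*(Z₀ - z) := by ring
      rw [habsz, hexp]
      linarith
  -- rpow conversion
  set p : ℝ := -(1/(k:ℝ)) with hpdef
  have hpneg : p < 0 := by
    rw [hpdef]; simp only [neg_neg, neg_lt, neg_zero]; positivity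
  have hwv : ∀ z, (w z) ^ p = v z := by
    intro z
    have h0 : w z = (v z) ^ (-(k:ℝ)) := by
      have : ((-(k:ℤ) : ℤ) : ℝ) = -(k:ℝ) := by push_cast; ring
      rw [← this, Real.rpow_intCast]
    rw [h0, ← Real.rpow_mul (le_of_lt (hvpos z))]
    have he : (-(k:ℝ)) * p = 1 := by
      rw [hpdef]; field_simp
    rw [he, Real.rpow_one]
  -- far bounds on v
  have hvfar : ∀ z ≤ Z₀, M^p * (1+|z|)^p ≤ v z ∧ v z ≤ ε^p * (1+|z|)^p := by
    intro z hz
    obtain ⟨hl, hu⟩ := hfar z hz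
    have h1z : (0:ℝ) < 1 + |z| := by positivity
    constructor
    · have := Real.rpow_le_rpow_of_nonpos (hwpos z) hu (le_of_lt hpneg)
      rw [hwv z] at this
      rwa [Real.mul_rpow (le_of_lt hMpos) (le_of_lt h1z)] at this
    · have := Real.rpow_le_rpow_of_nonpos (by positivity : (0:ℝ) < ε*(1+|z|)) hl
        (le_of_lt hpneg)
      rw [hwv z] at this
      rwa [Real.mul_rpow (le_of_lt hεpos) (le_of_lt h1z)] at this
  -- near part: compact interval [Z₀, 0]
  have hvcont : Continuous v := continuous_const.sub hU.continuous
  obtain ⟨zm, hzm, hzmin⟩ := isCompact_Icc.exists_isMinOn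
    (Set.nonempty_Icc.mpr hZ₀0) hvcont.continuousOn (f := v)
  set m : ℝ := v zm with hmdef
  have hmpos : 0 < m := hvpos zm
  set r : ℝ := 1 - Z₀ with hrdef
  have hrpos : (0:ℝ) < r := h1Z
  have hr1 : (1:ℝ) ≤ r := by rw [hrdef]; linarith
  have hnear : ∀ z ∈ Icc Z₀ (0:ℝ),
      m * (1+|z|)^p ≤ v z ∧ v z ≤ (um * r^(-p)) * (1+|z|)^p := by
    intro z hz
    have hz1 : Z₀ ≤ z := hz.1
    have hz2 : z ≤ 0 := hz.2
    have habsz : |z| = -z := abs_of_nonpos hz2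
    have h1z : (0:ℝ) < 1 + |z| := by positivity
    have h1z1 : (1:ℝ) ≤ 1 + |z| := by linarith [abs_nonneg z]
    have h1zr : 1 + |z| ≤ r := by rw [habsz, hrdef]; linarith
    constructor
    · have hle1 : (1+|z|)^p ≤ 1 :=
        Real.rpow_le_one_of_one_le_of_nonpos h1z1 (le_of_lt hpneg)
      have := isMinOn_iff.mp hzmin z hz
      calc m * (1+|z|)^p ≤ m * 1 := mul_le_mul_of_nonneg_left hle1 (le_of_lt hmpos)
        _ = m := mul_one m
        _ ≤ v z := this
    · have hrp : r^p ≤ (1+|z|)^p :=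
        Real.rpow_le_rpow_of_nonpos h1z h1zr (le_of_lt hpneg)
      have hrmul : r^(-p) * r^p = 1 := by
        rw [← Real.rpow_add hrpos]; simp
      calc v z ≤ um := le_of_lt (hvlt z)
        _ = (um * r^(-p)) * r^p := by rw [mul_assoc, hrmul, mul_one]
        _ ≤ (um * r^(-p)) * (1+|z|)^p := by
            apply mul_le_mul_of_nonneg_left hrp
            positivity
  -- assemble
  set C₁ : ℝ := min (M^p) m with hC₁def
  set C₂ : ℝ := max (ε^p) (um * r^(-p)) with hC₂def
  have hC₁pos : 0 < C₁ := lt_min (Real.rpow_pos_of_pos hMpos p) hmpos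
  have Hmain : ∀ z : ℝ, z ≤ 0 → C₁ * (1+|z|)^p ≤ v z ∧ v z ≤ C₂ * (1+|z|)^p := by
    intro z hz
    have h1z : (0:ℝ) < 1 + |z| := by positivity
    have h1zp : (0:ℝ) < (1+|z|)^p := Real.rpow_pos_of_pos h1z p
    rcases le_or_gt z Z₀ with hcase | hcase
    · obtain ⟨hl, hu⟩ := hvfar z hcase
      constructor
      · refine le_trans ?_ hl
        exact mul_le_mul_of_nonneg_right (min_le_left _ _) (le_of_lt h1zp)
      · refine le_trans hu ?_
        exact mul_le_mul_of_nonneg_right (le_max_left _ _) (le_of_lt h1zp)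
    · obtain ⟨hl, hu⟩ := hnear z ⟨le_of_lt hcase, hz⟩
      constructor
      · refine le_trans ?_ hl
        exact mul_le_mul_of_nonneg_right (min_le_right _ _) (le_of_lt h1zp)
      · refine le_trans hu ?_
        exact mul_le_mul_of_nonneg_right (le_max_right _ _) (le_of_lt h1zp)
  have hC₁₂ : C₁ ≤ C₂ := by
    have h0 := Hmain 0 (le_refl 0)
    simp only [abs_zero, add_zero, Real.one_rpow, mul_one] at h0
    linarith [h0.1, h0.2]
  exact ⟨C₁, C₂, hC₁pos, hC₁₂, fun z hz => Hmain z hz⟩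
end

section
/- Let k₊ ≥ 1 be an integer, let f be (k₊+1)-times continuously differentiable, and let U be a shock profile. Assume g^{(j)}(0) = 0 for 1 ≤ j ≤ k₊. Then there exists a constant C > 0 such that |U'(z)| ≤ C·U(z)^{2+k₊} for all z ∈ ℝ. -/
open Filter

/-- For a shock profile `U` with the degenerate condition `g⁽ʲ⁾(0) = 0`
for `1 ≤ j ≤ k₊`, one has `|U'(z)| ≤ C·U(z)^{2+k₊}` for all `z`. -/
theorem stmt_10
    (k : ℕ) (hk : 1 ≤ k)
    (f : ℝ → ℝ) (hf : ContDiff ℝ (k + 1 : ℕ) f)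
    (um : ℝ) (hum : 0 < um)
    (s : ℝ) (hs : s = (f um - f 0) / um)
    (g : ℝ → ℝ) (hg : ∀ u, g u = f u - f 0 - s * u)
    (U : ℝ → ℝ) (hU : ContDiff ℝ 1 U)
    (hUrange : ∀ z, U z ∈ Set.Ioo 0 um)
    (hUode : ∀ z, deriv U z = U z * g (U z))
    (hUbot : Tendsto U atBot (nhds um))
    (hUtop : Tendsto U atTop (nhds 0))
    (hdeg : ∀ j : ℕ, 1 ≤ j → j ≤ k → iteratedDeriv j g 0 = 0) :
    ∃ C : ℝ, 0 < C ∧ ∀ z : ℝ, |deriv U z| ≤ C * (U z) ^ (2 + k) := by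
  have hgfun : g = fun u => f u - f 0 - s * u := funext hg
  have hgc : ContDiff ℝ (k + 1 : ℕ) g := by
    rw [hgfun]
    exact (hf.sub contDiff_const).sub (contDiff_const.mul contDiff_id)
  have hg0 : g 0 = 0 := by rw [hg]; ring
  -- Taylor bound
  obtain ⟨C0, hC0⟩ := exists_taylor_mean_remainder_bound (f := g) (a := 0) (b := um)
    (n := k) hum.le hgc.contDiffOn
  -- The Taylor polynomial vanishes
  have hkey : ∀ j : ℕ, j ≤ k → iteratedDerivWithin j g (Set.Icc (0:ℝ) um) 0 = 0 := by
    intro j hj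
    have hade : HasFTaylorSeriesUpTo (k + 1 : ℕ) g (ftaylorSeries ℝ g) :=
      (contDiff_iff_ftaylorSeries).mp hgc
    have h1 : ftaylorSeries ℝ g 0 j = iteratedFDerivWithin ℝ j g (Set.Icc 0 um) 0 :=
      (hade.hasFTaylorSeriesUpToOn (Set.Icc 0 um)).eq_iteratedFDerivWithin_of_uniqueDiffOn
        (by exact_mod_cast Nat.cast_le.mpr (hj.trans (Nat.le_succ k)))
        (uniqueDiffOn_Icc hum) (Set.left_mem_Icc.mpr hum.le)
    have h2 : ftaylorSeries ℝ g 0 j = iteratedFDeriv ℝ j g 0 := rfl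
    have h3 : iteratedDeriv j g 0 = 0 := by
      rcases Nat.eq_zero_or_pos j with h | h
      · subst h; simpa [iteratedDeriv_zero] using hg0
      · exact hdeg j h hj
    rw [iteratedDerivWithin_eq_iteratedFDerivWithin, ← h1, h2,
      ← iteratedDeriv_eq_iteratedFDeriv, h3]
  have htay : ∀ x : ℝ, taylorWithinEval g k (Set.Icc (0:ℝ) um) 0 x = 0 := by
    intro x
    rw [taylor_within_apply]
    apply Finset.sum_eq_zero
    intro j hj
    rw [hkey j (Nat.lt_succ_iff.mp (Finset.mem_range.mp hj))]
    simp
  -- g bound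
  set C := max C0 1 with hC
  have hCpos : (0:ℝ) < C := lt_of_lt_of_le one_pos (le_max_right _ _)
  have hgb : ∀ x ∈ Set.Icc (0:ℝ) um, |g x| ≤ C * x ^ (k + 1) := by
    intro x hx
    have := hC0 x hx
    rw [htay x] at this
    simp only [sub_zero, Real.norm_eq_abs] at this
    exact this.trans (mul_le_mul_of_nonneg_right (le_max_left _ _) (pow_nonneg hx.1 _))
  refine ⟨C, hCpos, fun z => ?_⟩
  obtain ⟨hU0, hUum⟩ := hUrange z
  have hb := hgb (U z) ⟨hU0.le, hUum.le⟩
  rw [hUode z, abs_mul, abs_of_pos hU0]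
  calc U z * |g (U z)| ≤ U z * (C * U z ^ (k + 1)) :=
        mul_le_mul_of_nonneg_left hb hU0.le
    _ = C * U z ^ (2 + k) := by ring
end

section
/- Let k₋ ≥ 1 be an integer, let f be (k₋+1)-times continuously differentiable, and let U be a shock profile. Assume g^{(j)}(u_-) = 0 for 1 ≤ j ≤ k₋. Then there exists a constant C > 0 such that |U'(z)| ≤ C·(u_- - U(z))^{1+k₋} for all z ∈ ℝ. -/
open Filter

lemma my_iteratedDerivWithin_eq {n m : ℕ} {f : ℝ → ℝ} {s : Set ℝ}
    (hf : ContDiff ℝ (n : ℕ∞) f) (hs : UniqueDiffOn ℝ s) {x : ℝ} (hx : x ∈ s)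
    (hm : m ≤ n) :
    iteratedDerivWithin m f s x = iteratedDeriv m f x := by
  rw [iteratedDerivWithin_eq_iteratedFDerivWithin, iteratedDeriv_eq_iteratedFDeriv]
  congr 1
  exact (((contDiff_iff_ftaylorSeries.mp hf).hasFTaylorSeriesUpToOn s).eq_iteratedFDerivWithin_of_uniqueDiffOn
    (by exact_mod_cast hm) hs hx).symm

/-- For a shock profile `U` with the degenerate condition `g⁽ʲ⁾(u₋) = 0`
for `1 ≤ j ≤ k₋`, one has `|U'(z)| ≤ C·(u₋ - U(z))^{1+k₋}` for all `z`. -/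
theorem stmt_11
    (k : ℕ) (hk : 1 ≤ k)
    (f : ℝ → ℝ) (hf : ContDiff ℝ (k + 1 : ℕ) f)
    (um : ℝ) (hum : 0 < um)
    (s : ℝ) (hs : s = (f um - f 0) / um)
    (g : ℝ → ℝ) (hg : ∀ u, g u = f u - f 0 - s * u)
    (U : ℝ → ℝ) (hU : ContDiff ℝ 1 U)
    (hUrange : ∀ z, U z ∈ Set.Ioo 0 um)
    (hUode : ∀ z, deriv U z = U z * g (U z))
    (hUbot : Tendsto U atBot (nhds um))
    (hUtop : Tendsto U atTop (nhds 0))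
    (hdeg : ∀ j : ℕ, 1 ≤ j → j ≤ k → iteratedDeriv j g um = 0) :
    ∃ C : ℝ, 0 < C ∧ ∀ z : ℝ, |deriv U z| ≤ C * (um - U z) ^ (1 + k) := by
  have hgum : g um = 0 := by
    rw [hg, hs]; field_simp; ring
  have hgc : ContDiff ℝ (k + 1 : ℕ) g := by
    have : g = fun u => f u - f 0 - s * u := funext hg
    rw [this]
    exact (hf.sub contDiff_const).sub (contDiff_const.mul contDiff_id)
  set h : ℝ → ℝ := fun u => g (2 * um - u) with hh_def
  have hh : ContDiff ℝ (k + 1 : ℕ) h :=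
    hgc.comp (contDiff_const.sub contDiff_id)
  -- iterated derivatives of h at um vanish up to order k
  have hhder : ∀ j : ℕ, j ≤ k → iteratedDeriv j h um = 0 := by
    intro j hj
    have e1 : h = fun u => g (-(u + -(2 * um))) := by
      funext u; simp only [hh_def]; congr 1; ring
    have e2 : iteratedDeriv j h um = iteratedDeriv j (fun v => g (-v)) (um + -(2 * um)) := by
      rw [e1]
      exact congrFun (iteratedDeriv_comp_add_const j (fun v => g (-v)) (-(2 * um))) um
    rw [e2, iteratedDeriv_comp_neg]
    have : -(um + -(2 * um)) = um := by ring
    rw [this]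
    rcases Nat.eq_zero_or_pos j with rfl | hj1
    · simp [hgum]
    · rw [hdeg j hj1 hj, smul_zero]
  -- Taylor bound for h on [um, 2um]
  have hab : um ≤ 2 * um := by linarith
  have hx : um < 2 * um := by linarith
  obtain ⟨C, hC⟩ := exists_taylor_mean_remainder_bound (n := k) hab
    (hh.contDiffOn : ContDiffOn ℝ (k + 1 : ℕ) h (Set.Icc um (2 * um)))
  -- Taylor polynomial of h at um vanishes
  have htaylor : ∀ x : ℝ, taylorWithinEval h k (Set.Icc um (2 * um)) um x = 0 := by
    intro x
    rw [taylor_within_apply]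
    apply Finset.sum_eq_zero
    intro j hj
    have hjk : j ≤ k := Nat.lt_succ_iff.mp (Finset.mem_range.mp hj)
    rw [my_iteratedDerivWithin_eq (n := k + 1) hh (uniqueDiffOn_Icc hx)
      (Set.left_mem_Icc.mpr hab) (hjk.trans (Nat.le_succ k)), hhder j hjk, smul_zero]
  -- main bound on g
  have hgbound : ∀ z : ℝ, |g (U z)| ≤ |C| * (um - U z) ^ (k + 1) := by
    intro z
    obtain ⟨hU0, hUum⟩ := hUrange z
    have hmem : 2 * um - U z ∈ Set.Icc um (2 * um) := by
      simp only [Set.mem_Icc]; constructor <;> linarith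
    have := hC (2 * um - U z) hmem
    rw [htaylor, sub_zero] at this
    have hval : h (2 * um - U z) = g (U z) := by
      show g (2 * um - (2 * um - U z)) = g (U z); norm_num
    rw [hval, Real.norm_eq_abs] at this
    have harg : 2 * um - U z - um = um - U z := by ring
    rw [harg] at this
    have hpow : (0:ℝ) ≤ (um - U z) ^ (k + 1) := pow_nonneg (by linarith) _
    calc |g (U z)| ≤ C * (um - U z) ^ (k + 1) := this
      _ ≤ |C| * (um - U z) ^ (k + 1) := by
          apply mul_le_mul_of_nonneg_right (le_abs_self C) hpow
  refine ⟨um * |C| + 1, by positivity, fun z => ?_⟩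
  obtain ⟨hU0, hUum⟩ := hUrange z
  have h1 := hgbound z
  have hpow : (0:ℝ) ≤ (um - U z) ^ (k + 1) := pow_nonneg (by linarith) _
  have hexp : (um - U z) ^ (1 + k) = (um - U z) ^ (k + 1) := by rw [add_comm]
  rw [hUode z, abs_mul, hexp]
  have hUabs : |U z| = U z := abs_of_pos hU0
  rw [hUabs]
  have hgnn : 0 ≤ |g (U z)| := abs_nonneg _
  nlinarith [abs_nonneg C, mul_le_mul_of_nonneg_left h1 hU0.le]
end

section
/- Let k₊ ≥ 1 be an integer, let f be (k₊+2)-times continuously differentiable, and let U be a shock profile. Assume the degenerate condition at the right state, g^{(j)}(0) = 0 for 1 ≤ j ≤ k₊ and g^{(k₊+1)}(0) ≠ 0, and the nondegenerate condition at the left state, g'(u_-) = f'(u_-) - s > 0. Define w₄ : (0, u_-) → ℝ by w₄(u) = u·(u - u_-)/g(u) (which is positive and C¹ on (0, u_-)). Then sup_{z ∈ ℝ} |w₄'(U(z))/w₄(U(z))| · |U'(z)/U(z)| < ∞. -/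
open Filter

/-- For a shock profile `U` with the degenerate condition at the right state
(`g⁽ʲ⁾(0) = 0` for `1 ≤ j ≤ k₊`, `g⁽ᵏ⁺⁺¹⁾(0) ≠ 0`) and the nondegenerate condition
`g'(u₋) = f'(u₋) - s > 0` at the left state, the weight `w₄(u) = u·(u - u₋)/g(u)`
satisfies `sup_z |w₄'(U(z))/w₄(U(z))|·|U'(z)/U(z)| < ∞`. -/
theorem stmt_16
    (k : ℕ) (hk : 1 ≤ k)
    (f : ℝ → ℝ) (hf : ContDiff ℝ (k + 2 : ℕ) f)
    (um : ℝ) (hum : 0 < um)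
    (s : ℝ) (hs : s = (f um - f 0) / um)
    (g : ℝ → ℝ) (hg : ∀ u, g u = f u - f 0 - s * u)
    (U : ℝ → ℝ) (hU : ContDiff ℝ 1 U)
    (hUrange : ∀ z, U z ∈ Set.Ioo 0 um)
    (hUode : ∀ z, deriv U z = U z * g (U z))
    (hUbot : Tendsto U atBot (nhds um))
    (hUtop : Tendsto U atTop (nhds 0))
    (hdeg : ∀ j : ℕ, 1 ≤ j → j ≤ k → iteratedDeriv j g 0 = 0)
    (hdeg' : iteratedDeriv (k + 1) g 0 ≠ 0)
    (hnd : 0 < deriv f um - s)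
    (w₄ : ℝ → ℝ) (hw₄ : ∀ u ∈ Set.Ioo 0 um, w₄ u = u * (u - um) / g u) :
    ∃ M : ℝ, ∀ z : ℝ,
      |deriv w₄ (U z) / w₄ (U z)| * |deriv U z / U z| ≤ M := by
  -- `f` is differentiable with continuous derivative
  have hf1 : ContDiff ℝ 1 f := hf.of_le (by norm_cast; omega)
  have hfd : Differentiable ℝ f := hf1.differentiable one_ne_zero
  have hfd' : Continuous (deriv f) := hf1.continuous_deriv le_rfl
  -- `g` as a formula
  have hgfun : g = fun u => f u - f 0 - s * u := funext hg
  have hgd : Differentiable ℝ g := by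
    rw [hgfun]
    exact (hfd.sub_const _).sub ((differentiable_const s).mul differentiable_id)
  have hgderiv : ∀ u, deriv g u = deriv f u - s := by
    intro u
    rw [hgfun]
    have h1 : HasDerivAt (fun u => f u - f 0 - s * u) (deriv f u - s) u := by
      exact (((hfd u).hasDerivAt.sub_const (f 0)).sub
        ((hasDerivAt_id u).const_mul s)).congr_deriv (by ring)
    exact h1.deriv
  have hgderivc : Continuous (deriv g) := by
    have : deriv g = fun u => deriv f u - s := funext hgderiv
    rw [this]; exact hfd'.sub continuous_const
  -- values at endpoints
  have hg0 : g 0 = 0 := by rw [hg]; ring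
  have hgum : g um = 0 := by rw [hg, hs]; field_simp; ring
  -- bound on `deriv g` on `[0, um]`
  obtain ⟨L, hL⟩ := (isCompact_Icc (a := (0:ℝ)) (b := um)).exists_bound_of_continuousOn
    hgderivc.continuousOn
  have hL0 : 0 ≤ L := le_trans (norm_nonneg _) (hL 0 ⟨le_rfl, hum.le⟩)
  -- Lipschitz bounds
  have hlip : ∀ x ∈ Set.Icc (0:ℝ) um, ∀ y ∈ Set.Icc (0:ℝ) um, |g y - g x| ≤ L * |y - x| := by
    intro x hx y hy
    have := Convex.norm_image_sub_le_of_norm_deriv_le (f := g) (s := Set.Icc (0:ℝ) um)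
      (fun u _ => hgd u) (fun u hu => hL u hu) (convex_Icc _ _) hx hy
    simpa [Real.norm_eq_abs] using this
  refine ⟨3 * L, fun z => ?_⟩
  set u := U z with hu
  obtain ⟨hu0, huum⟩ := hUrange z
  have huIcc : u ∈ Set.Icc (0:ℝ) um := ⟨hu0.le, huum.le⟩
  have hgu_le1 : |g u| ≤ L * u := by
    have := hlip 0 ⟨le_rfl, hum.le⟩ u huIcc
    simpa [hg0, abs_of_pos (show (0:ℝ) < u from hu0)] using this
  have hgu_le2 : |g u| ≤ L * (um - u) := by
    have := hlip um ⟨hum.le, le_rfl⟩ u huIcc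
    have h2 : |u - um| = um - u := by rw [abs_sub_comm]; exact abs_of_pos (by linarith)
    simpa [hgum, h2] using this
  have hUone : deriv U z / U z = g u := by
    rw [hUode z, ← hu]
    exact mul_div_cancel_left₀ _ (ne_of_gt (show (0:ℝ) < u from hu0))
  by_cases hgu : g u = 0
  · rw [hUone, hgu]
    simp [hL0]
  · -- compute the derivative of w₄ at u
    have hne : u ≠ 0 := ne_of_gt hu0
    have hne' : u - um ≠ 0 := sub_ne_zero.mpr (ne_of_lt huum)
    -- eventual equality near u
    have hev : w₄ =ᶠ[nhds u] fun v => v * (v - um) / g v := by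
      have : Set.Ioo (0:ℝ) um ∈ nhds u := isOpen_Ioo.mem_nhds ⟨hu0, huum⟩
      filter_upwards [this] with v hv using hw₄ v hv
    have hp : HasDerivAt (fun v : ℝ => v * (v - um)) (1 * (u - um) + u * 1) u :=
      (hasDerivAt_id u).mul ((hasDerivAt_id u).sub_const um)
    have hgd' : HasDerivAt g (deriv g u) u := (hgd u).hasDerivAt
    have hdiv : HasDerivAt (fun v => v * (v - um) / g v)
        (((1 * (u - um) + u * 1) * g u - u * (u - um) * deriv g u) / (g u) ^ 2) u :=
      hp.div hgd' hgu
    have hderivw : deriv w₄ u =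
        ((1 * (u - um) + u * 1) * g u - u * (u - um) * deriv g u) / (g u) ^ 2 := by
      rw [hev.deriv_eq]; exact hdiv.deriv
    have hw4u : w₄ u = u * (u - um) / g u := hw₄ u ⟨hu0, huum⟩
    have key : deriv w₄ u / w₄ u * (deriv U z / U z) =
        g u / u + g u / (u - um) - deriv g u := by
      rw [hUone, hderivw, hw4u]
      field_simp
    calc |deriv w₄ u / w₄ u| * |deriv U z / U z|
        = |deriv w₄ u / w₄ u * (deriv U z / U z)| := (abs_mul _ _).symm
      _ = |g u / u + g u / (u - um) - deriv g u| := by rw [key]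
      _ ≤ |g u / u| + |g u / (u - um)| + |deriv g u| := by
          calc |g u / u + g u / (u - um) - deriv g u|
              ≤ |g u / u + g u / (u - um)| + |deriv g u| := abs_sub _ _
            _ ≤ |g u / u| + |g u / (u - um)| + |deriv g u| := by
                have := abs_add_le (g u / u) (g u / (u - um)); linarith
      _ ≤ L + L + L := by
          have h1 : |g u / u| ≤ L := by
            rw [abs_div, abs_of_pos hu0, div_le_iff₀ hu0]; exact hgu_le1
          have h2 : |g u / (u - um)| ≤ L := by
            have habs : |u - um| = um - u := by
              rw [abs_sub_comm]; exact abs_of_pos (by linarith)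
            rw [abs_div, habs, div_le_iff₀ (by linarith : (0:ℝ) < um - u)]
            exact hgu_le2
          have h3 : |deriv g u| ≤ L := hL u huIcc
          linarith
      _ = 3 * L := by ring
end
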